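/- arXiv:1911.11936 — 2 statements merged into one kernel-verified Lean document; each statement's English description precedes it below -/
import Mathlib

section
/- Ω(n/ε²) samples are necessary for Pandora's problem: there exist absolute constants c, c' > 0 such that for every (possibly randomized) learning algorithm mapping N i.i.d. sample reward vectors to a policy, if N ≤ c·n/ε² then there is an instance with n boxes, each of opening cost 1/n, and each reward distribution equal either to Bernoulli with success probability (1+ε)/n or to Bernoulli with success probability (1−ε)/n (rewards in {0,1}), on which the expected objective of the learned policy is at most the optimal expected objective minus c'·ε. -/
open MeasureTheory ProbabilityTheory
open scoped NNReal ENNReal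

/-- Expected value `h(D) = E_{t∼D}[h(t)]` of a hypothesis under the product
distribution with marginals `μ i`. -/
noncomputable def expVal {n : ℕ} (h : (Fin n → ℝ) → ℝ) (μ : Fin n → Measure ℝ) : ℝ :=
  ∫ t, h t ∂(Measure.pi μ)

/-- A distribution on `ℝ` supported on `[0,1]`. -/
def SuppIn01 (μ : Measure ℝ) : Prop := μ (Set.Icc (0 : ℝ) 1)ᶜ = 0

/-- `Opt(D) = sup_{h ∈ H} h(D)`. -/
noncomputable def Opt {n : ℕ} (H : Set ((Fin n → ℝ) → ℝ)) (μ : Fin n → Measure ℝ) : ℝ :=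
  ⨆ h : H, expVal (h : (Fin n → ℝ) → ℝ) μ

/-- Coordinatewise first-order stochastic dominance `P ⪰ Q`:
`F_{P_i}(t) ≤ F_{Q_i}(t)` for every `i` and `t`. -/
def StochDom {n : ℕ} (P Q : Fin n → Measure ℝ) : Prop :=
  ∀ (i : Fin n) (t : ℝ), cdf (P i) t ≤ cdf (Q i) t

/-- Strong monotonicity of a problem `H`: for every product distribution `D̃`
(on `[0,1]ⁿ`) there is an optimal hypothesis `h_{D̃}` whose expected value on any
product distribution `D ⪰ D̃` is at least `Opt(D̃)`. -/
def StronglyMonotone {n : ℕ} (H : Set ((Fin n → ℝ) → ℝ)) : Prop :=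
  ∀ Dt : Fin n → Measure ℝ, (∀ i, IsProbabilityMeasure (Dt i)) → (∀ i, SuppIn01 (Dt i)) →
    ∃ h ∈ H, expVal h Dt = Opt H Dt ∧
      ∀ D : Fin n → Measure ℝ, (∀ i, IsProbabilityMeasure (D i)) → (∀ i, SuppIn01 (D i)) →
        StochDom D Dt → Opt H Dt ≤ expVal h D

/-- The marginal empirical measure: the uniform distribution over the `i`-th
coordinates of the samples `s`. -/
noncomputable def empMeas {N n : ℕ} (s : Fin N → Fin n → ℝ) (i : Fin n) : Measure ℝ :=
  ((N : ℝ≥0)⁻¹ : ℝ≥0) • ∑ m : Fin N, Measure.dirac (s m i)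

/-- Expectation of `h` under the *product empirical distribution* `E = E_1 × ⋯ × E_n`
determined by the samples `s` (written directly as a finite average over all
combinations of sample coordinates). -/
noncomputable def empExp {N n : ℕ} (s : Fin N → Fin n → ℝ) (h : (Fin n → ℝ) → ℝ) : ℝ :=
  (∑ m : Fin n → Fin N, h fun i => s (m i) i) / (N ^ n : ℕ)

/-- `Opt(E)` for the product empirical distribution of the samples `s`. -/
noncomputable def empOpt {N n : ℕ} (H : Set ((Fin n → ℝ) → ℝ)) (s : Fin N → Fin n → ℝ) : ℝ :=
  ⨆ h : H, empExp s (h : (Fin n → ℝ) → ℝ)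

/-- The empirical CDF `F_{E_i}(t) = #{m : s_i^{(m)} ≤ t} / N`. -/
noncomputable def empCdf {N n : ℕ} (s : Fin N → Fin n → ℝ) (i : Fin n) (t : ℝ) : ℝ :=
  ((Finset.univ.filter fun m : Fin N => s m i ≤ t).card : ℝ) / N

/-- Total variation distance between two measures. -/
noncomputable def tvDist {α : Type*} [MeasurableSpace α] (P Q : Measure α) : ℝ :=
  ⨆ A : {A : Set α // MeasurableSet A}, ((P A).toReal - (Q A).toReal)

/-- Squared Hellinger distance `H²(P,Q) = 1 − ∫ √(dP/dλ · dQ/dλ) dλ` (`λ = P + Q`). -/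
noncomputable def sqHellinger {α : Type*} [MeasurableSpace α] (P Q : Measure α) : ℝ :=
  1 - ∫ x, Real.sqrt ((P.rnDeriv (P + Q) x).toReal * (Q.rnDeriv (P + Q) x).toReal) ∂(P + Q)

/-- The measure of i.i.d. samples: `N` independent draws from the product
distribution with marginals `μ`. -/
noncomputable def samples (N : ℕ) {n : ℕ} (μ : Fin n → Measure ℝ) :
    Measure (Fin N → Fin n → ℝ) :=
  Measure.pi fun _ : Fin N => Measure.pi μ

/-- Weitzman's reservation value of a box with reward distribution `μ` and
opening cost `c`: `σ = inf {σ : E[max(t − σ, 0)] ≤ c}`. -/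
noncomputable def reservation (μ : Measure ℝ) (c : ℝ) : ℝ :=
  sInf {σ : ℝ | ∫ t, max (t - σ) 0 ∂μ ≤ c}

/-- Execution of Weitzman-style index policy: boxes are inspected in the order
`o 0, o 1, …`; with current best observed reward `best` and total cost `paid`,
the policy stops (taking `best − paid`) as soon as `best` is at least the
reservation value of the next box, and otherwise opens it. -/
noncomputable def weitzAux {n : ℕ} (o : Equiv.Perm (Fin n)) (σ c t : Fin n → ℝ) :
    ℕ → ℝ → ℝ → ℝ
  | k, best, paid =>
    if h : k < n then
      if σ (o ⟨k, h⟩) ≤ best then best - paid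
      else weitzAux o σ c t (k + 1) (max best (t (o ⟨k, h⟩))) (paid + c (o ⟨k, h⟩))
    else best - paid
  termination_by k => n - k
  decreasing_by omega

/-- The realized objective (reward taken minus total cost paid) of Weitzman's
index policy with inspection order `o`, reservation values `σ` and costs `c`,
on the reward realization `t`. -/
noncomputable def weitzmanReward {n : ℕ} (o : Equiv.Perm (Fin n)) (σ c t : Fin n → ℝ) : ℝ :=
  weitzAux o σ c t 0 0 0

/-- Best observed reward in a history (`0` if nothing was opened). -/
noncomputable def histBest {n : ℕ} (hist : Fin n → Option ℝ) : ℝ :=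
  ⨆ i : Fin n, (hist i).getD 0

/-- Total cost paid in a history. -/
noncomputable def histPaid {n : ℕ} (c : Fin n → ℝ) (hist : Fin n → Option ℝ) : ℝ :=
  ∑ i : Fin n, if (hist i).isSome then c i else 0

/-- Execution of a general adaptive policy `π`: given the history of observed
rewards, `π` either proposes to open a further (unopened) box or stops; the
realized objective is the best observed reward minus the total cost paid. -/
noncomputable def runPolicyAux {n : ℕ} (π : (Fin n → Option ℝ) → Option (Fin n))
    (c t : Fin n → ℝ) : ℕ → (Fin n → Option ℝ) → ℝ
  | 0, hist => histBest hist - histPaid c hist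
  | fuel + 1, hist =>
    match π hist with
    | none => histBest hist - histPaid c hist
    | some i =>
      if (hist i).isSome then histBest hist - histPaid c hist
      else runPolicyAux π c t fuel (Function.update hist i (some (t i)))

/-- The realized objective of the adaptive policy `π` on realization `t`. -/
noncomputable def runPolicy {n : ℕ} (π : (Fin n → Option ℝ) → Option (Fin n))
    (c t : Fin n → ℝ) : ℝ :=
  runPolicyAux π c t n fun _ => none

/-- The optimal expected objective of Pandora's problem with reward
distributions `μ` and costs `c`, over all adaptive policies. -/
noncomputable def pandoraOpt {n : ℕ} (μ : Fin n → Measure ℝ) (c : Fin n → ℝ) : ℝ :=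
  ⨆ π : (Fin n → Option ℝ) → Option (Fin n), ∫ t, runPolicy π c t ∂(Measure.pi μ)

/-- The Bernoulli distribution on `{0,1} ⊆ ℝ` with success probability `p`. -/
noncomputable def bernR (p : ℝ) : Measure ℝ :=
  p.toNNReal • Measure.dirac (1 : ℝ) + (1 - p).toNNReal • Measure.dirac (0 : ℝ)

/-- The hard Pandora instance: box `i` has reward distribution Bernoulli with
success probability `(1+ε)/n` if `v i` (a 'plus' box) and `(1−ε)/n` otherwise. -/
noncomputable def hardBox (n : ℕ) (ε : ℝ) (v : Fin n → Bool) (i : Fin n) : Measure ℝ :=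
  bernR ((1 + if v i then ε else -ε) / n)

/-!
STATEMENT 17: `Ω(n/ε²)` samples are necessary for Pandora's problem: for any
(possibly randomized — modelled by an auxiliary probability space `(Ω, PΩ)`)
learning algorithm `A` using `N ≤ c·n/ε²` samples, there is a hard instance
(costs `1/n`, Bernoulli rewards) on which its expected objective is at most the
optimum minus `c'·ε`. -/
namespace St17

open MeasureTheory ProbabilityTheory Finset
open scoped NNReal ENNReal

noncomputable section

/-- value of a bit -/
def xB (b : Bool) : ℝ := if b then 1 else 0

/-- Bernoulli weight -/
def W1 (p : ℝ) (b : Bool) : ℝ := if b then p else 1 - p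

lemma xB_nonneg (b : Bool) : 0 ≤ xB b := by cases b <;> simp [xB]
lemma xB_le_one (b : Bool) : xB b ≤ 1 := by cases b <;> simp [xB]
lemma W1_nonneg {p : ℝ} (h0 : 0 ≤ p) (h1 : p ≤ 1) (b : Bool) : 0 ≤ W1 p b := by
  cases b <;> simp [W1] <;> linarith
lemma W1_sum (p : ℝ) : W1 p true + W1 p false = 1 := by simp [W1]

/-- finite measure made of weighted diracs -/
lemma integrable_dirac' {α : Type*} [MeasurableSpace α] [MeasurableSingletonClass α]
    (f : α → ℝ) (a : α) : Integrable f (Measure.dirac a) :=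
  (integrable_const (f a)).congr (ae_eq_dirac f).symm

lemma integral_sum_dirac {α : Type*} [MeasurableSpace α] [MeasurableSingletonClass α]
    {κ : Type*} [Fintype κ] (w : κ → ℝ) (hw : ∀ k, 0 ≤ w k) (y : κ → α) (f : α → ℝ) :
    ∫ x, f x ∂(∑ k : κ, ENNReal.ofReal (w k) • Measure.dirac (y k))
      = ∑ k : κ, w k * f (y k) := by
  rw [integral_finset_sum_measure]
  · refine Finset.sum_congr rfl fun k _ => ?_
    rw [integral_smul_measure, integral_dirac]
    simp [ENNReal.toReal_ofReal (hw k), smul_eq_mul]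
  · intro k _
    exact (integrable_dirac' f (y k)).smul_measure ENNReal.ofReal_ne_top

lemma sum_dirac_isFiniteMeasure {α : Type*} [MeasurableSpace α]
    {κ : Type*} [Fintype κ] (w : κ → ℝ) (y : κ → α) :
    IsFiniteMeasure (∑ k : κ, ENNReal.ofReal (w k) • Measure.dirac (y k)) := by
  constructor
  rw [Measure.coe_finset_sum]
  simp only [Finset.sum_apply]
  refine (ENNReal.sum_lt_top).2 fun k _ => ?_
  simp only [Measure.smul_apply, smul_eq_mul]
  exact ENNReal.mul_lt_top ENNReal.ofReal_lt_top (by simp [measure_lt_top])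

/-- product of weighted-dirac measures is a weighted-dirac measure -/
lemma pi_sum_dirac {ι : Type*} [Fintype ι] [DecidableEq ι] {α : ι → Type*} [∀ i, MeasurableSpace (α i)]
    [∀ i, MeasurableSingletonClass (α i)]
    {κ : Type*} [Fintype κ] (w : ι → κ → ℝ) (hw : ∀ i k, 0 ≤ w i k) (y : ∀ i, κ → α i) :
    Measure.pi (fun i => ∑ k : κ, ENNReal.ofReal (w i k) • Measure.dirac (y i k))
      = ∑ g : ι → κ, ENNReal.ofReal (∏ i, w i (g i)) • Measure.dirac (fun i => y i (g i)) := by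
  haveI : ∀ i, SigmaFinite ((fun i => ∑ k : κ, ENNReal.ofReal (w i k) • Measure.dirac (y i k)) i) := by
    intro i
    haveI := sum_dirac_isFiniteMeasure (w i) (y i)
    infer_instance
  refine Measure.pi_eq fun s hs => ?_
  have hrhs : (∑ g : ι → κ, ENNReal.ofReal (∏ i, w i (g i)) •
      Measure.dirac (fun i => y i (g i))) (Set.univ.pi s)
      = ∑ g : ι → κ, ENNReal.ofReal (∏ i, w i (g i)) *
          Set.indicator (Set.univ.pi s) 1 (fun i => y i (g i)) := by
    rw [Measure.coe_finset_sum]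
    simp only [Finset.sum_apply]
    refine Finset.sum_congr rfl fun g _ => ?_
    rw [Measure.smul_apply, Measure.dirac_apply' _ (MeasurableSet.univ_pi hs), smul_eq_mul]
  rw [hrhs]
  have hterm : ∀ g : ι → κ, ENNReal.ofReal (∏ i, w i (g i)) *
      Set.indicator (Set.univ.pi s) 1 (fun i => y i (g i))
      = ∏ i, (ENNReal.ofReal (w i (g i)) * Set.indicator (s i) 1 (y i (g i))) := by
    intro g
    rw [ENNReal.ofReal_prod_of_nonneg (fun i _ => hw i (g i)), Finset.prod_mul_distrib]
    congr 1
    by_cases hmem : (fun i => y i (g i)) ∈ Set.univ.pi s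
    · rw [Set.indicator_of_mem hmem]
      have : ∀ i, y i (g i) ∈ s i := fun i => hmem i (Set.mem_univ i)
      simp [Set.indicator_of_mem, this]
    · rw [Set.indicator_of_notMem hmem]
      simp only [Set.mem_univ_pi] at hmem
      push_neg at hmem
      obtain ⟨i, hi⟩ := hmem
      rw [eq_comm]
      apply Finset.prod_eq_zero (Finset.mem_univ i)
      simp [Set.indicator_of_notMem hi]
  calc ∑ g : ι → κ, ENNReal.ofReal (∏ i, w i (g i)) *
        Set.indicator (Set.univ.pi s) 1 (fun i => y i (g i))
      = ∑ g : ι → κ, ∏ i, (ENNReal.ofReal (w i (g i)) * Set.indicator (s i) 1 (y i (g i))) :=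
        Finset.sum_congr rfl fun g _ => hterm g
    _ = ∏ i, ∑ k : κ, (ENNReal.ofReal (w i k) * Set.indicator (s i) 1 (y i k)) := by
        rw [Finset.prod_univ_sum (fun _ => (Finset.univ : Finset κ))]
        rw [Fintype.piFinset_univ]
    _ = ∏ i, (∑ k : κ, ENNReal.ofReal (w i k) • Measure.dirac (y i k)) (s i) := by
        refine Finset.prod_congr rfl fun i _ => ?_
        rw [Measure.coe_finset_sum]
        simp only [Finset.sum_apply]
        refine (Finset.sum_congr rfl fun k _ => ?_).symm
        rw [Measure.smul_apply, Measure.dirac_apply' _ (hs i), smul_eq_mul]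

end
end St17
namespace St17
open MeasureTheory ProbabilityTheory Finset
open scoped NNReal ENNReal
noncomputable section

variable {n N : ℕ} {ε : ℝ}

/-- success probability of box with sign `u` -/
def pB (ε : ℝ) (n : ℕ) (u : Bool) : ℝ := (1 + if u then ε else -ε) / n

def Wv (ε : ℝ) {n : ℕ} (v b : Fin n → Bool) : ℝ := ∏ i, W1 (pB ε n (v i)) (b i)

def WS (ε : ℝ) {n N : ℕ} (v : Fin n → Bool) (S : Fin N → Fin n → Bool) : ℝ :=
  ∏ m, Wv ε v (S m)

def tB {n : ℕ} (b : Fin n → Bool) : Fin n → ℝ := fun i => xB (b i)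

def sB {n N : ℕ} (S : Fin N → Fin n → Bool) : Fin N → Fin n → ℝ := fun m i => xB (S m i)

lemma pB_pos (hε : 0 < ε) (hε1 : ε < 1) (hn : 0 < n) (u : Bool) : 0 < pB ε n u := by
  have hn' : (0:ℝ) < n := by exact_mod_cast hn
  cases u
  · simp only [pB, Bool.false_eq_true, if_false]
    apply div_pos (by linarith) hn'
  · simp only [pB, if_true]
    apply div_pos (by linarith) hn'

lemma pB_lt_half (hε : 0 < ε) (hn : 0 < n) (hh : (1 + ε) / (n : ℝ) < 1 / 2) (u : Bool) :
    pB ε n u < 1 / 2 := by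
  have hn' : (0:ℝ) < n := by exact_mod_cast hn
  cases u
  · simp only [pB, Bool.false_eq_true, if_false]
    rw [div_lt_div_iff₀ hn' (by norm_num)] at hh ⊢
    linarith
  · simpa [pB] using hh

lemma pB_nonneg (hε : 0 < ε) (hε1 : ε < 1) (hn : 0 < n) (u : Bool) : 0 ≤ pB ε n u :=
  (pB_pos hε hε1 hn u).le

lemma pB_le_one (hε : 0 < ε) (hn : 0 < n) (hh : (1 + ε) / (n : ℝ) < 1 / 2) (u : Bool) :
    pB ε n u ≤ 1 := (pB_lt_half hε hn hh u).le.trans (by norm_num)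

lemma Wv_nonneg (hε : 0 < ε) (hε1 : ε < 1) (hn : 0 < n)
    (hh : (1 + ε) / (n : ℝ) < 1 / 2) (v b : Fin n → Bool) : 0 ≤ Wv ε v b :=
  Finset.prod_nonneg fun i _ =>
    W1_nonneg (pB_nonneg hε hε1 hn _) (pB_le_one hε hn hh _) _

lemma Wv_sum_one (v : Fin n → Bool) : ∑ b : Fin n → Bool, Wv ε v b = 1 := by
  have := Finset.prod_univ_sum (fun _ : Fin n => (Finset.univ : Finset Bool))
      (fun i k => W1 (pB ε n (v i)) k)
  rw [Fintype.piFinset_univ] at this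
  simp only [Wv]
  rw [← this]
  have : ∀ i : Fin n, ∑ j : Bool, W1 (pB ε n (v i)) j = 1 := fun i => by
    rw [Fintype.sum_bool, W1_sum]
  rw [Finset.prod_congr rfl fun i _ => this i, Finset.prod_const, one_pow]

lemma WS_nonneg (hε : 0 < ε) (hε1 : ε < 1) (hn : 0 < n)
    (hh : (1 + ε) / (n : ℝ) < 1 / 2) (v : Fin n → Bool) (S : Fin N → Fin n → Bool) :
    0 ≤ WS ε v S :=
  Finset.prod_nonneg fun m _ => Wv_nonneg hε hε1 hn hh v _

lemma WS_sum_one (v : Fin n → Bool) : ∑ S : Fin N → Fin n → Bool, WS ε v S = 1 := by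
  have := Finset.prod_univ_sum (fun _ : Fin N => (Finset.univ : Finset (Fin n → Bool)))
      (fun m b => Wv ε v b)
  rw [Fintype.piFinset_univ] at this
  simp only [WS]
  rw [← this, Finset.prod_congr rfl fun (m : Fin N) _ => Wv_sum_one (ε := ε) v, Finset.prod_const, one_pow]

lemma bernR_eq (p : ℝ) :
    bernR p = ∑ k : Bool, ENNReal.ofReal (W1 p k) • Measure.dirac (xB k) := by
  rw [Fintype.sum_bool]
  simp only [W1, xB, if_true, Bool.false_eq_true, if_false]
  rfl

lemma pi_hardBox_eq (hε : 0 < ε) (hε1 : ε < 1) (hn : 0 < n)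
    (hh : (1 + ε) / (n : ℝ) < 1 / 2) (v : Fin n → Bool) :
    Measure.pi (hardBox n ε v)
      = ∑ b : Fin n → Bool, ENNReal.ofReal (Wv ε v b) • Measure.dirac (tB b) := by
  have h1 : hardBox n ε v = fun i => ∑ k : Bool, ENNReal.ofReal (W1 (pB ε n (v i)) k) • Measure.dirac (xB k) := by
    funext i
    exact bernR_eq _
  rw [h1, pi_sum_dirac (fun i k => W1 (pB ε n (v i)) k)
    (fun i k => W1_nonneg (pB_nonneg hε hε1 hn _) (pB_le_one hε hn hh _) _) (fun _ k => xB k)]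
  rfl

lemma integral_pi_hardBox (hε : 0 < ε) (hε1 : ε < 1) (hn : 0 < n)
    (hh : (1 + ε) / (n : ℝ) < 1 / 2)
    (v : Fin n → Bool) (f : (Fin n → ℝ) → ℝ) :
    ∫ t, f t ∂(Measure.pi (hardBox n ε v)) = ∑ b : Fin n → Bool, Wv ε v b * f (tB b) := by
  rw [pi_hardBox_eq hε hε1 hn hh]
  exact integral_sum_dirac _ (fun b => Wv_nonneg hε hε1 hn hh v b) _ f

lemma integral_samples (hε : 0 < ε) (hε1 : ε < 1) (hn : 0 < n)
    (hh : (1 + ε) / (n : ℝ) < 1 / 2)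
    (v : Fin n → Bool) (F : (Fin N → Fin n → ℝ) → ℝ) :
    ∫ s, F s ∂(samples N (hardBox n ε v))
      = ∑ S : Fin N → Fin n → Bool, WS ε v S * F (sB S) := by
  have h1 : samples N (hardBox n ε v)
      = Measure.pi (fun _ : Fin N =>
          ∑ b : Fin n → Bool, ENNReal.ofReal (Wv ε v b) • Measure.dirac (tB b)) := by
    rw [samples]
    congr 1
    funext _
    exact pi_hardBox_eq hε hε1 hn hh v
  rw [h1, pi_sum_dirac (fun _ b => Wv ε v b)
    (fun _ b => Wv_nonneg hε hε1 hn hh v b) (fun _ b => tB b)]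
  exact integral_sum_dirac _ (fun S => WS_nonneg hε hε1 hn hh v S) _ F

end
end St17
namespace St17
open MeasureTheory Finset
noncomputable section

variable {n : ℕ}

/-- mirror of `runPolicyAux` computing the final history -/
def opnAux (π : (Fin n → Option ℝ) → Option (Fin n)) (t : Fin n → ℝ) :
    ℕ → (Fin n → Option ℝ) → (Fin n → Option ℝ)
  | 0, h => h
  | fuel+1, h =>
    match π h with
    | none => h
    | some i => if (h i).isSome then h else opnAux π t fuel (Function.update h i (some (t i)))

lemma run_eq_opn (π : (Fin n → Option ℝ) → Option (Fin n)) (c t : Fin n → ℝ) :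
    ∀ (fuel : ℕ) (h : Fin n → Option ℝ),
      runPolicyAux π c t fuel h
        = histBest (opnAux π t fuel h) - histPaid c (opnAux π t fuel h) := by
  intro fuel
  induction fuel with
  | zero => intro h; simp [runPolicyAux, opnAux]
  | succ fuel ih =>
    intro h
    cases hπ : π h with
    | none => simp [runPolicyAux, opnAux, hπ]
    | some i =>
      by_cases hs : (h i).isSome
      · simp [runPolicyAux, opnAux, hπ, hs]
      · simp only [runPolicyAux, opnAux, hπ, hs, if_false, Bool.false_eq_true]
        exact ih _

lemma opn_isSome_mono (π : (Fin n → Option ℝ) → Option (Fin n)) (t : Fin n → ℝ)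
    (i : Fin n) :
    ∀ (fuel : ℕ) (h : Fin n → Option ℝ), (h i).isSome →
      ((opnAux π t fuel h) i).isSome := by
  intro fuel
  induction fuel with
  | zero => intro h hi; simpa [opnAux] using hi
  | succ fuel ih =>
    intro h hi
    cases hπ : π h with
    | none => simpa [opnAux, hπ] using hi
    | some j =>
      by_cases hs : (h j).isSome
      · simpa [opnAux, hπ, hs] using hi
      · simp only [opnAux, hπ, hs, if_false, Bool.false_eq_true]
        apply ih
        rcases eq_or_ne j i with rfl | hne
        · simp
        · simpa [Function.update_of_ne (Ne.symm hne)] using hi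

lemma opn_entries (π : (Fin n → Option ℝ) → Option (Fin n)) (t : Fin n → ℝ) :
    ∀ (fuel : ℕ) (h : Fin n → Option ℝ),
      (∀ j, h j = none ∨ h j = some (t j)) →
      ∀ j, (opnAux π t fuel h) j = none ∨ (opnAux π t fuel h) j = some (t j) := by
  intro fuel
  induction fuel with
  | zero => intro h hh; simpa [opnAux] using hh
  | succ fuel ih =>
    intro h hh
    cases hπ : π h with
    | none => simpa [opnAux, hπ] using hh
    | some j =>
      by_cases hs : (h j).isSome
      · simpa [opnAux, hπ, hs] using hh
      · simp only [opnAux, hπ, hs, if_false, Bool.false_eq_true]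
        apply ih
        intro j'
        rcases eq_or_ne j' j with rfl | hne
        · right; simp
        · simpa [Function.update_of_ne hne] using hh j'

lemma opn_indep (π : (Fin n → Option ℝ) → Option (Fin n)) (t : Fin n → ℝ)
    (i : Fin n) (x : ℝ) :
    ∀ (fuel : ℕ) (h : Fin n → Option ℝ),
      ((opnAux π t fuel h) i).isSome
        = ((opnAux π (Function.update t i x) fuel h) i).isSome := by
  intro fuel
  induction fuel with
  | zero => intro h; simp [opnAux]
  | succ fuel ih =>
    intro h
    cases hπ : π h with
    | none => simp [opnAux, hπ]
    | some j =>
      by_cases hs : (h j).isSome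
      · simp [opnAux, hπ, hs]
      · simp only [opnAux, hπ, hs, if_false, Bool.false_eq_true]
        rcases eq_or_ne j i with rfl | hne
        · rw [opn_isSome_mono π t j fuel _ (by simp),
            opn_isSome_mono π (Function.update t j x) j fuel _ (by simp)]
        · rw [Function.update_of_ne hne]
          exact ih _

lemma run_read_indep (π : (Fin n → Option ℝ) → Option (Fin n)) (c t : Fin n → ℝ)
    (ℓ : Fin n) (x : ℝ) :
    ∀ (fuel : ℕ) (h : Fin n → Option ℝ), (h ℓ).isSome →
      runPolicyAux π c t fuel h = runPolicyAux π c (Function.update t ℓ x) fuel h := by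
  intro fuel
  induction fuel with
  | zero => intro h _; simp [runPolicyAux]
  | succ fuel ih =>
    intro h hℓ
    cases hπ : π h with
    | none => simp [runPolicyAux, hπ]
    | some j =>
      by_cases hs : (h j).isSome
      · simp [runPolicyAux, hπ, hs]
      · have hne : j ≠ ℓ := by
          intro hj; rw [hj] at hs; exact hs hℓ
        simp only [runPolicyAux, hπ, hs, if_false, Bool.false_eq_true]
        rw [Function.update_of_ne hne]
        apply ih
        rcases eq_or_ne ℓ j with rfl | hne'
        · simp
        · simpa [Function.update_of_ne hne'] using hℓ

/-- which boxes get opened by policy `π` on realization `t` -/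
def Opn (π : (Fin n → Option ℝ) → Option (Fin n)) (t : Fin n → ℝ) (i : Fin n) : Bool :=
  ((opnAux π t n (fun _ => none)) i).isSome

lemma Opn_indep (π : (Fin n → Option ℝ) → Option (Fin n)) (t : Fin n → ℝ)
    (i : Fin n) (x : ℝ) : Opn π (Function.update t i x) i = Opn π t i := by
  rw [Opn, Opn, opn_indep π t i x]

lemma histPaid_eq (c : Fin n → ℝ) (h : Fin n → Option ℝ) :
    histPaid c h = ∑ i, if (h i).isSome then c i else 0 := rfl

lemma histBest_le_sum (hn : 0 < n) (t : Fin n → ℝ) (ht : ∀ j, 0 ≤ t j)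
    (h : Fin n → Option ℝ) (hh : ∀ j, h j = none ∨ h j = some (t j)) :
    histBest h ≤ ∑ i, if (h i).isSome then t i else 0 := by
  haveI : Nonempty (Fin n) := ⟨⟨0, hn⟩⟩
  have hterm : ∀ j, 0 ≤ if (h j).isSome then t j else 0 := fun j => by
    by_cases hj : (h j).isSome <;> simp [hj, ht j]
  apply ciSup_le
  intro i
  rcases hh i with hi | hi
  · simp only [hi, Option.getD_none]
    exact Finset.sum_nonneg fun j _ => hterm j
  · have h4 : (h i).getD 0 = t i := by rw [hi]; rfl
    rw [h4]
    have h5 : (if (h i).isSome then t i else 0) = t i := by rw [hi]; simp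
    rw [← h5]
    exact Finset.single_le_sum (f := fun j => if (h j).isSome then t j else 0)
      (fun j _ => hterm j) (Finset.mem_univ i)

lemma histBest_nonneg (hn : 0 < n) (t : Fin n → ℝ) (ht : ∀ j, 0 ≤ t j)
    (h : Fin n → Option ℝ) (hh : ∀ j, h j = none ∨ h j = some (t j)) :
    0 ≤ histBest h := by
  haveI : Nonempty (Fin n) := ⟨⟨0, hn⟩⟩
  have hbdd : BddAbove (Set.range fun i => (h i).getD 0) :=
    (Set.finite_range _).bddAbove
  refine le_trans ?_ (le_ciSup hbdd (⟨0, hn⟩ : Fin n))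
  rcases hh ⟨0, hn⟩ with hi | hi <;> simp [hi, ht]

lemma histBest_le_one (hn : 0 < n) (t : Fin n → ℝ) (ht : ∀ j, t j ≤ 1)
    (h : Fin n → Option ℝ) (hh : ∀ j, h j = none ∨ h j = some (t j)) :
    histBest h ≤ 1 := by
  haveI : Nonempty (Fin n) := ⟨⟨0, hn⟩⟩
  apply ciSup_le
  intro i
  rcases hh i with hi | hi <;> simp [hi, ht]

lemma run_le_sum (hn : 0 < n) (π : (Fin n → Option ℝ) → Option (Fin n))
    (t : Fin n → ℝ) (ht : ∀ j, 0 ≤ t j) :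
    runPolicy π (fun _ => 1 / (n:ℝ)) t
      ≤ ∑ i, if Opn π t i then t i - 1 / (n:ℝ) else 0 := by
  rw [runPolicy, run_eq_opn]
  set H := opnAux π t n (fun _ => none) with hH
  have hent : ∀ j, H j = none ∨ H j = some (t j) :=
    opn_entries π t n _ (fun j => Or.inl rfl)
  have h1 : histBest H ≤ ∑ i, if (H i).isSome then t i else 0 :=
    histBest_le_sum hn t ht H hent
  have h2 : histPaid (fun _ => 1 / (n:ℝ)) H = ∑ i, if (H i).isSome then 1 / (n:ℝ) else 0 :=
    histPaid_eq _ _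
  rw [h2]
  have h3 : ∀ i, (if Opn π t i then t i - 1 / (n:ℝ) else 0)
      = (if (H i).isSome then t i else 0) - (if (H i).isSome then 1 / (n:ℝ) else 0) := by
    intro i
    rw [Opn, ← hH]
    by_cases hi : (H i).isSome <;> simp [hi]
  rw [Finset.sum_congr rfl fun i _ => h3 i, Finset.sum_sub_distrib]
  linarith

lemma run_le_one (hn : 0 < n) (π : (Fin n → Option ℝ) → Option (Fin n))
    (t : Fin n → ℝ) (ht0 : ∀ j, 0 ≤ t j) (ht1 : ∀ j, t j ≤ 1) :
    runPolicy π (fun _ => 1 / (n:ℝ)) t ≤ 1 := by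
  rw [runPolicy, run_eq_opn]
  set H := opnAux π t n (fun _ => none) with hH
  have hent : ∀ j, H j = none ∨ H j = some (t j) :=
    opn_entries π t n _ (fun j => Or.inl rfl)
  have h1 : histBest H ≤ 1 := histBest_le_one hn t ht1 H hent
  have h2 : 0 ≤ histPaid (fun _ => 1 / (n:ℝ)) H := by
    rw [histPaid_eq]
    exact Finset.sum_nonneg fun j _ => by positivity
  linarith

end
end St17
namespace St17
open MeasureTheory Finset
noncomputable section

variable {n : ℕ}

/-- the weight of `b` off coordinate `i` -/
def Rfun (ε : ℝ) {n : ℕ} (v : Fin n → Bool) (i : Fin n) (b : Fin n → Bool) : ℝ :=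
  ∏ j ∈ Finset.univ.erase i, W1 (pB ε n (v j)) (b j)

lemma Rfun_update_right (ε : ℝ) (v : Fin n → Bool) (i : Fin n) (b : Fin n → Bool) (β : Bool) :
    Rfun ε v i (Function.update b i β) = Rfun ε v i b := by
  refine Finset.prod_congr rfl fun j hj => ?_
  rw [Function.update_of_ne (Finset.ne_of_mem_erase hj)]

lemma Rfun_update_left (ε : ℝ) (v : Fin n → Bool) (i : Fin n) (b : Fin n → Bool) (u : Bool) :
    Rfun ε (Function.update v i u) i b = Rfun ε v i b := by
  refine Finset.prod_congr rfl fun j hj => ?_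
  rw [Function.update_of_ne (Finset.ne_of_mem_erase hj)]

lemma Wv_eq_mul_Rfun (ε : ℝ) (v : Fin n → Bool) (i : Fin n) (b : Fin n → Bool) :
    Wv ε v b = W1 (pB ε n (v i)) (b i) * Rfun ε v i b :=
  (Finset.mul_prod_erase Finset.univ (fun j => W1 (pB ε n (v j)) (b j))
    (Finset.mem_univ i)).symm

/-- key pairing lemma: split the expectation over the `i`-th coordinate -/
lemma pair_sum (ε : ℝ) (v : Fin n → Bool) (i : Fin n) (f : (Fin n → Bool) → ℝ) :
    ∑ b : Fin n → Bool, Wv ε v b * f b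
      = ∑ b ∈ Finset.univ.filter (fun b : Fin n → Bool => b i = false),
          Rfun ε v i b *
            ((1 - pB ε n (v i)) * f b + pB ε n (v i) * f (Function.update b i true)) := by
  classical
  rw [← Finset.sum_filter_add_sum_filter_not Finset.univ
    (fun b : Fin n → Bool => b i = false) (fun b => Wv ε v b * f b)]
  have h2 : ∑ b ∈ Finset.univ.filter (fun b : Fin n → Bool => ¬ b i = false),
        Wv ε v b * f b
      = ∑ b ∈ Finset.univ.filter (fun b : Fin n → Bool => b i = false),
          Rfun ε v i b * (pB ε n (v i) * f (Function.update b i true)) := by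
    refine Finset.sum_nbij' (fun b => Function.update b i false)
      (fun b => Function.update b i true) ?_ ?_ ?_ ?_ ?_
    · intro b _; simp
    · intro b _; simp
    · intro b hb
      simp only [Finset.mem_filter, Bool.not_eq_false] at hb
      show Function.update (Function.update b i false) i true = b
      rw [Function.update_idem, ← hb.2, Function.update_eq_self]
    · intro b hb
      simp only [Finset.mem_filter] at hb
      show Function.update (Function.update b i true) i false = b
      rw [Function.update_idem, ← hb.2, Function.update_eq_self]
    · intro b hb
      simp only [Finset.mem_filter, Bool.not_eq_false] at hb
      rw [Wv_eq_mul_Rfun ε v i, hb.2, Rfun_update_right]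
      have h3 : Function.update (Function.update b i false) i true = b := by
        rw [Function.update_idem, ← hb.2, Function.update_eq_self]
      rw [h3, W1]
      simp only [if_true]
      ring
  rw [h2]
  have h1 : ∀ b ∈ Finset.univ.filter (fun b : Fin n → Bool => b i = false),
      Wv ε v b * f b = Rfun ε v i b * ((1 - pB ε n (v i)) * f b) := by
    intro b hb
    simp only [Finset.mem_filter] at hb
    rw [Wv_eq_mul_Rfun ε v i, hb.2, W1]
    simp only [Bool.false_eq_true, if_false]
    ring
  rw [Finset.sum_congr rfl h1, ← Finset.sum_add_distrib]
  refine Finset.sum_congr rfl fun b _ => by ring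

end
end St17
namespace St17
open MeasureTheory Finset
noncomputable section

variable {n N : ℕ}

lemma sqrt_prod {α : Type*} (f : α → ℝ) :
    ∀ (s : Finset α), (∀ x ∈ s, 0 ≤ f x) →
      Real.sqrt (∏ x ∈ s, f x) = ∏ x ∈ s, Real.sqrt (f x) := by
  classical
  intro s
  induction s using Finset.induction_on with
  | empty => intro _; simp
  | @insert a s' ha ih =>
    intro hf
    rw [Finset.prod_insert ha, Finset.prod_insert ha,
      Real.sqrt_mul (hf a (Finset.mem_insert_self a s')),
      ih fun x hx' => hf x (Finset.mem_insert_of_mem hx')]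

lemma sqrt_mul_le_half {x y : ℝ} (hx : 0 ≤ x) (hy : 0 ≤ y) :
    Real.sqrt (x * y) ≤ (x + y) / 2 := by
  have h : x * y ≤ ((x + y) / 2) ^ 2 := by nlinarith [sq_nonneg (x - y)]
  calc Real.sqrt (x * y) ≤ Real.sqrt (((x + y) / 2) ^ 2) := Real.sqrt_le_sqrt h
    _ = (x + y) / 2 := Real.sqrt_sq (by positivity)

/-- the Hellinger affinity of the two Bernoulli boxes -/
def AA (ε : ℝ) (n : ℕ) : ℝ :=
  Real.sqrt (pB ε n true * pB ε n false)
    + Real.sqrt ((1 - pB ε n true) * (1 - pB ε n false))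

variable {ε : ℝ}

lemma W1_mul_nonneg (hε : 0 < ε) (hε1 : ε < 1) (hn : 0 < n)
    (hh : (1 + ε) / (n : ℝ) < 1 / 2) (u u' b : Bool) :
    0 ≤ W1 (pB ε n u) b * W1 (pB ε n u') b :=
  mul_nonneg (W1_nonneg (pB_nonneg hε hε1 hn _) (pB_le_one hε hn hh _) _)
    (W1_nonneg (pB_nonneg hε hε1 hn _) (pB_le_one hε hn hh _) _)

lemma hell_box (hε : 0 < ε) (hε1 : ε < 1) (hn : 0 < n)
    (hh : (1 + ε) / (n : ℝ) < 1 / 2)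
    (v v' : Fin n → Bool) (i : Fin n) (hvv' : ∀ j, j ≠ i → v j = v' j)
    (hvi : v i = true) (hv'i : v' i = false) :
    ∑ b : Fin n → Bool, Real.sqrt (Wv ε v b * Wv ε v' b) = AA ε n := by
  have hterm : ∀ b : Fin n → Bool, Real.sqrt (Wv ε v b * Wv ε v' b)
      = ∏ j, Real.sqrt (W1 (pB ε n (v j)) (b j) * W1 (pB ε n (v' j)) (b j)) := by
    intro b
    rw [Wv, Wv, ← Finset.prod_mul_distrib]
    exact sqrt_prod _ _ fun j _ => W1_mul_nonneg hε hε1 hn hh _ _ _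
  rw [Finset.sum_congr rfl fun b _ => hterm b]
  have := (Finset.prod_univ_sum (fun _ : Fin n => (Finset.univ : Finset Bool))
      (fun j k => Real.sqrt (W1 (pB ε n (v j)) k * W1 (pB ε n (v' j)) k))).symm
  rw [Fintype.piFinset_univ] at this
  rw [this]
  have hone : ∀ j, j ≠ i →
      ∑ k : Bool, Real.sqrt (W1 (pB ε n (v j)) k * W1 (pB ε n (v' j)) k) = 1 := by
    intro j hj
    rw [Fintype.sum_bool, ← hvv' j hj]
    have h0 := pB_nonneg hε hε1 hn (v j)
    have h1 := pB_le_one hε hn hh (v j)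
    simp only [W1, if_true, Bool.false_eq_true, if_false]
    rw [Real.sqrt_mul_self h0, Real.sqrt_mul_self (by linarith)]
    ring
  have hi : ∑ k : Bool, Real.sqrt (W1 (pB ε n (v i)) k * W1 (pB ε n (v' i)) k) = AA ε n := by
    rw [Fintype.sum_bool, hvi, hv'i, AA]
    simp only [W1, if_true, Bool.false_eq_true, if_false]
  calc ∏ j, ∑ k : Bool, Real.sqrt (W1 (pB ε n (v j)) k * W1 (pB ε n (v' j)) k)
      = (∑ k : Bool, Real.sqrt (W1 (pB ε n (v i)) k * W1 (pB ε n (v' i)) k)) *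
        ∏ j ∈ Finset.univ.erase i, ∑ k : Bool, Real.sqrt (W1 (pB ε n (v j)) k * W1 (pB ε n (v' j)) k) :=
        (Finset.mul_prod_erase _ _ (Finset.mem_univ i)).symm
    _ = AA ε n := by
        rw [hi, Finset.prod_congr rfl fun j hj => hone j (Finset.ne_of_mem_erase hj),
          Finset.prod_const_one, mul_one]

lemma hell_samples (hε : 0 < ε) (hε1 : ε < 1) (hn : 0 < n)
    (hh : (1 + ε) / (n : ℝ) < 1 / 2)
    (v v' : Fin n → Bool) (i : Fin n) (hvv' : ∀ j, j ≠ i → v j = v' j)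
    (hvi : v i = true) (hv'i : v' i = false) :
    ∑ S : Fin N → Fin n → Bool, Real.sqrt (WS ε v S * WS ε v' S) = (AA ε n) ^ N := by
  have hterm : ∀ S : Fin N → Fin n → Bool, Real.sqrt (WS ε v S * WS ε v' S)
      = ∏ m, Real.sqrt (Wv ε v (S m) * Wv ε v' (S m)) := by
    intro S
    rw [WS, WS, ← Finset.prod_mul_distrib]
    exact sqrt_prod _ _ fun m _ =>
      mul_nonneg (Wv_nonneg hε hε1 hn hh v _) (Wv_nonneg hε hε1 hn hh v' _)
  rw [Finset.sum_congr rfl fun S _ => hterm S]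
  have := (Finset.prod_univ_sum (fun _ : Fin N => (Finset.univ : Finset (Fin n → Bool)))
      (fun m b => Real.sqrt (Wv ε v b * Wv ε v' b))).symm
  rw [Fintype.piFinset_univ] at this
  rw [this, Finset.prod_congr rfl fun m _ => hell_box hε hε1 hn hh v v' i hvv' hvi hv'i,
    Finset.prod_const, Finset.card_univ, Fintype.card_fin]

lemma AA_nonneg : 0 ≤ AA ε n := by
  rw [AA]; positivity

lemma AA_le_one (hε : 0 < ε) (hε1 : ε < 1) (hn : 0 < n)
    (hh : (1 + ε) / (n : ℝ) < 1 / 2) : AA ε n ≤ 1 := by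
  have hp1 := pB_nonneg hε hε1 hn true
  have hp2 := pB_nonneg hε hε1 hn false
  have hq1 : 0 ≤ 1 - pB ε n true := by have := pB_le_one hε hn hh true; linarith
  have hq2 : 0 ≤ 1 - pB ε n false := by have := pB_le_one hε hn hh false; linarith
  have h1 := sqrt_mul_le_half hp1 hp2
  have h2 := sqrt_mul_le_half hq1 hq2
  rw [AA]
  linarith


end
end St17
namespace St17
open MeasureTheory Finset
noncomputable section
variable {n N : ℕ} {ε : ℝ}
lemma sqrt_sq_sub_ge {a d : ℝ} (haa : 2/3 ≤ a) (hd0 : 0 ≤ d) (hd9 : d ≤ 1/9) :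
    a - (3/2)*d ≤ Real.sqrt (a^2 - d) := by
  have hpos : 0 < a - (3/2) * d := by linarith
  have hsq : (a - (3/2)*d)^2 ≤ a^2 - d := by
    nlinarith [mul_nonneg (show (0:ℝ) ≤ a - 2/3 by linarith) hd0,
      mul_nonneg hd0 (show (0:ℝ) ≤ 1/9 - d by linarith)]
  exact (Real.le_sqrt' hpos).mpr hsq

lemma one_sub_AA_le (hε : 0 < ε) (hε1 : ε < 1) (hn3 : 3 ≤ n)
    (hh : (1 + ε) / (n : ℝ) < 1 / 2) :
    1 - AA ε n ≤ (3/2) * ε^2 / n := by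
  have hn : 0 < n := by omega
  have hn' : (3:ℝ) ≤ n := by exact_mod_cast hn3
  have hnpos : (0:ℝ) < n := by linarith
  have h1n3 : (1:ℝ)/n ≤ 1/3 := by
    rw [div_le_div_iff₀ hnpos (by norm_num)]; linarith
  have h1n : (0:ℝ) < 1/n := by positivity
  have hone : (0:ℝ) ≤ 1 - ε^2 := by
    nlinarith [mul_nonneg (show (0:ℝ) ≤ 1-ε by linarith) (show (0:ℝ) ≤ 1+ε by linarith)]
  have hε2 : (0:ℝ) ≤ ε^2 := sq_nonneg ε
  have e1 : pB ε n true * pB ε n false = (1 - ε^2) * (1/n)^2 := by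
    simp only [pB, if_true, Bool.false_eq_true, if_false]
    field_simp
    ring
  have e2 : (1 - pB ε n true) * (1 - pB ε n false) = (1 - 1/n)^2 - ε^2 * (1/n)^2 := by
    simp only [pB, if_true, Bool.false_eq_true, if_false]
    field_simp
    ring
  have haa : (2:ℝ)/3 ≤ 1 - 1/(n:ℝ) := by linarith
  have hd0 : (0:ℝ) ≤ ε^2 * (1/(n:ℝ))^2 := by positivity
  have hsq13 : (1/(n:ℝ))^2 ≤ (1/3:ℝ)^2 := by
    have := pow_le_pow_left₀ h1n.le h1n3 2
    simpa using this
  have hd9 : ε^2 * (1/(n:ℝ))^2 ≤ 1/9 := by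
    have h := mul_le_mul (show ε^2 ≤ 1 by linarith) hsq13 (by positivity) (by norm_num)
    calc ε^2 * (1/(n:ℝ))^2 ≤ 1 * (1/3:ℝ)^2 := h
      _ = 1/9 := by norm_num
  have h1 : Real.sqrt (pB ε n true * pB ε n false) ≥ (1 - ε^2) * (1/n) := by
    rw [e1, Real.sqrt_mul hone, Real.sqrt_sq (by positivity)]
    have hsle : Real.sqrt (1 - ε^2) ≤ 1 := Real.sqrt_le_one.mpr (by linarith)
    have hs2 := Real.sq_sqrt hone
    have hsnn := Real.sqrt_nonneg (1 - ε^2)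
    have hs : Real.sqrt (1 - ε^2) ≥ 1 - ε^2 := by nlinarith
    exact mul_le_mul_of_nonneg_right hs h1n.le
  have h2 : Real.sqrt ((1 - pB ε n true) * (1 - pB ε n false))
      ≥ (1 - 1/(n:ℝ)) - (3/2) * (ε^2 * (1/(n:ℝ))^2) := by
    rw [e2]
    exact sqrt_sq_sub_ge haa hd0 hd9
  have hAA : AA ε n ≥ (1 - ε^2) * (1/n) + (1 - 1/(n:ℝ)) - (3/2) * (ε^2 * (1/(n:ℝ))^2) := by
    rw [AA]; linarith
  have hx : (1 - ε^2) * (1/(n:ℝ)) = 1/n - ε^2 * (1/n) := by ring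
  have hkey : 1 - AA ε n ≤ ε^2 * (1/n) + (3/2) * (ε^2 * (1/(n:ℝ))^2) := by linarith
  have hmul := mul_le_mul_of_nonneg_left h1n3 (mul_nonneg hε2 h1n.le)
  have hlast : (3/2) * (ε^2 * (1/(n:ℝ))^2) ≤ (1/2) * ε^2 * (1/n) := by
    calc (3/2) * (ε^2 * (1/(n:ℝ))^2) = (3/2) * (ε^2 * (1/(n:ℝ)) * (1/n)) := by ring
      _ ≤ (3/2) * (ε^2 * (1/(n:ℝ)) * (1/3)) := by linarith
      _ = (1/2) * ε^2 * (1/n) := by ring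
  have hfin : (3/2) * ε^2 / (n:ℝ) = (3/2) * (ε^2 * (1/n)) := by
    field_simp
  rw [hfin]
  linarith

end
end St17
namespace St17
open MeasureTheory Finset
noncomputable section
variable {n N : ℕ} {ε : ℝ}

lemma tv_bound (hε : 0 < ε) (hε1 : ε < 1) (hn3 : 3 ≤ n)
    (hh : (1 + ε) / (n : ℝ) < 1 / 2)
    (hNc : 12 * (N:ℝ) * ε^2 / n ≤ 1/10000)
    (v v' : Fin n → Bool) (i : Fin n) (hvv' : ∀ j, j ≠ i → v j = v' j)
    (hvi : v i = true) (hv'i : v' i = false) :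
    ∑ S : Fin N → Fin n → Bool, |WS ε v S - WS ε v' S| ≤ 1/100 := by
  have hn : 0 < n := by omega
  have hnpos : (0:ℝ) < n := by exact_mod_cast hn
  have hP : ∀ S : Fin N → Fin n → Bool, 0 ≤ WS ε v S :=
    fun S => WS_nonneg hε hε1 hn hh v S
  have hQ : ∀ S : Fin N → Fin n → Bool, 0 ≤ WS ε v' S :=
    fun S => WS_nonneg hε hε1 hn hh v' S
  set P : (Fin N → Fin n → Bool) → ℝ := fun S => WS ε v S with hPdef
  set Q : (Fin N → Fin n → Bool) → ℝ := fun S => WS ε v' S with hQdef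
  have habs : ∀ S, |P S - Q S|
      = |Real.sqrt (P S) - Real.sqrt (Q S)| * (Real.sqrt (P S) + Real.sqrt (Q S)) := by
    intro S
    have h1 : (Real.sqrt (P S) - Real.sqrt (Q S)) * (Real.sqrt (P S) + Real.sqrt (Q S))
        = P S - Q S := by
      have := Real.sq_sqrt (hP S)
      have := Real.sq_sqrt (hQ S)
      nlinarith [Real.sq_sqrt (hP S), Real.sq_sqrt (hQ S)]
    have hb : |Real.sqrt (P S) + Real.sqrt (Q S)| = Real.sqrt (P S) + Real.sqrt (Q S) :=
      abs_of_nonneg (by positivity)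
    rw [← h1, abs_mul, hb]
  have hCS := Finset.sum_mul_sq_le_sq_mul_sq Finset.univ
    (fun S => |Real.sqrt (P S) - Real.sqrt (Q S)|)
    (fun S => Real.sqrt (P S) + Real.sqrt (Q S))
  have hPQ : ∀ S, Real.sqrt (P S) * Real.sqrt (Q S) = Real.sqrt (P S * Q S) :=
    fun S => (Real.sqrt_mul (hP S) _).symm
  have hsum1 : ∑ S, |Real.sqrt (P S) - Real.sqrt (Q S)|^2
      = 2 - 2 * (AA ε n)^N := by
    have hexp : ∀ S : Fin N → Fin n → Bool, |Real.sqrt (P S) - Real.sqrt (Q S)|^2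
        = P S + Q S - 2 * Real.sqrt (P S * Q S) := by
      intro S
      rw [sq_abs, ← hPQ S]
      have h1 := Real.sq_sqrt (hP S)
      have h2 := Real.sq_sqrt (hQ S)
      nlinarith
    rw [Finset.sum_congr rfl fun S _ => hexp S]
    have hs1 : ∑ S : Fin N → Fin n → Bool, P S = 1 := WS_sum_one v
    have hs2 : ∑ S : Fin N → Fin n → Bool, Q S = 1 := WS_sum_one v'
    have hs3 : ∑ S : Fin N → Fin n → Bool, Real.sqrt (P S * Q S) = (AA ε n)^N :=
      hell_samples hε hε1 hn hh v v' i hvv' hvi hv'i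
    rw [show (fun S : Fin N → Fin n → Bool => P S + Q S - 2 * Real.sqrt (P S * Q S))
        = (fun S => P S + Q S - 2 * Real.sqrt (P S * Q S)) from rfl]
    rw [Finset.sum_sub_distrib, Finset.sum_add_distrib, hs1, hs2, ← Finset.mul_sum, hs3]
    ring
  have hsum2 : ∑ S, (Real.sqrt (P S) + Real.sqrt (Q S))^2
      = 2 + 2 * (AA ε n)^N := by
    have hexp : ∀ S : Fin N → Fin n → Bool, (Real.sqrt (P S) + Real.sqrt (Q S))^2
        = P S + Q S + 2 * Real.sqrt (P S * Q S) := by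
      intro S
      rw [← hPQ S]
      have h1 := Real.sq_sqrt (hP S)
      have h2 := Real.sq_sqrt (hQ S)
      nlinarith
    rw [Finset.sum_congr rfl fun S _ => hexp S]
    have hs1 : ∑ S : Fin N → Fin n → Bool, P S = 1 := WS_sum_one v
    have hs2 : ∑ S : Fin N → Fin n → Bool, Q S = 1 := WS_sum_one v'
    have hs3 : ∑ S : Fin N → Fin n → Bool, Real.sqrt (P S * Q S) = (AA ε n)^N :=
      hell_samples hε hε1 hn hh v v' i hvv' hvi hv'i
    rw [Finset.sum_add_distrib, Finset.sum_add_distrib, hs1, hs2, ← Finset.mul_sum, hs3]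
    ring
  have hAA0 : 0 ≤ AA ε n := AA_nonneg
  have hAA1 : AA ε n ≤ 1 := AA_le_one hε hε1 hn hh
  have hAApow1 : (AA ε n)^N ≤ 1 := pow_le_one₀ hAA0 hAA1
  have hAApow : 1 - (AA ε n)^N ≤ (N:ℝ) * (1 - AA ε n) := by
    have := one_add_mul_le_pow (show (-2:ℝ) ≤ AA ε n - 1 by linarith) N
    rw [show (1 + (AA ε n - 1)) = AA ε n by ring] at this
    linarith
  have hhell := one_sub_AA_le hε hε1 hn3 hh
  have hN0 : (0:ℝ) ≤ (N:ℝ) := Nat.cast_nonneg N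
  have hbound : (∑ S, |P S - Q S|)^2 ≤ 1/10000 := by
    have e1 : ∑ S, |P S - Q S|
        = ∑ S, |Real.sqrt (P S) - Real.sqrt (Q S)| * (Real.sqrt (P S) + Real.sqrt (Q S)) :=
      Finset.sum_congr rfl fun S _ => habs S
    rw [e1]
    calc (∑ S, |Real.sqrt (P S) - Real.sqrt (Q S)| * (Real.sqrt (P S) + Real.sqrt (Q S)))^2
        ≤ (∑ S, |Real.sqrt (P S) - Real.sqrt (Q S)|^2) *
          (∑ S, (Real.sqrt (P S) + Real.sqrt (Q S))^2) := hCS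
      _ = (2 - 2 * (AA ε n)^N) * (2 + 2 * (AA ε n)^N) := by rw [hsum1, hsum2]
      _ ≤ (2 * ((N:ℝ) * (1 - AA ε n))) * 4 := by nlinarith
      _ ≤ (2 * ((N:ℝ) * ((3/2) * ε^2 / n))) * 4 := by
          have hmul := mul_le_mul_of_nonneg_left hhell hN0
          nlinarith
      _ = 12 * (N:ℝ) * ε^2 / n := by ring
      _ ≤ 1/10000 := hNc
  have hnn : 0 ≤ ∑ S, |P S - Q S| := Finset.sum_nonneg fun S _ => abs_nonneg _
  nlinarith

end
end St17
namespace St17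
open Finset
noncomputable section
variable {n : ℕ}

def kv {n : ℕ} (v : Fin n → Bool) : ℕ := (Finset.univ.filter fun i => v i = true).card

lemma kv_update_true {v : Fin n → Bool} {i : Fin n} (hvi : v i = false) :
    kv (Function.update v i true) = kv v + 1 := by
  have hset : (Finset.univ.filter fun j => Function.update v i true j = true)
      = insert i (Finset.univ.filter fun j => v j = true) := by
    ext j
    simp only [Finset.mem_filter, Finset.mem_univ, true_and, Finset.mem_insert]
    rcases eq_or_ne j i with rfl | hne
    · simp
    · simp [Function.update_of_ne hne, hne]
  rw [kv, hset, Finset.card_insert_of_notMem (by simp [hvi]), kv]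

lemma kv_update_false {v : Fin n → Bool} {i : Fin n} (hvi : v i = true) :
    kv (Function.update v i false) + 1 = kv v := by
  have hset : (Finset.univ.filter fun j => Function.update v i false j = true)
      = (Finset.univ.filter fun j => v j = true).erase i := by
    ext j
    simp only [Finset.mem_filter, Finset.mem_univ, true_and, Finset.mem_erase]
    rcases eq_or_ne j i with rfl | hne
    · simp
    · simp [Function.update_of_ne hne, hne]
  rw [kv, hset, Finset.card_erase_of_mem (by simp [hvi]), kv]
  have : 0 < (Finset.univ.filter fun j => v j = true).card :=
    Finset.card_pos.2 ⟨i, by simp [hvi]⟩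
  omega

lemma kv_le (v : Fin n → Bool) : kv v ≤ n := by
  rw [kv]
  calc (Finset.univ.filter fun i => v i = true).card ≤ Finset.univ.card :=
        Finset.card_filter_le _ _
    _ = n := by simp

/-- number of `v`'s with exactly `m` plus boxes -/
def Nm (n m : ℕ) : ℕ := ((Finset.univ : Finset (Fin n → Bool)).filter fun v => kv v = m).card

lemma edge_count (m : ℕ) :
    (n - m) * Nm n m = (m + 1) * Nm n (m+1) := by
  classical
  have h1 : ((Finset.univ : Finset ((Fin n → Bool) × Fin n)).filter
      (fun p => kv p.1 = m ∧ p.1 p.2 = false)).card = (n - m) * Nm n m := by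
    rw [Finset.card_filter]
    rw [Fintype.sum_prod_type]
    have hinner : ∀ v : Fin n → Bool,
        (∑ i : Fin n, if kv v = m ∧ v i = false then 1 else 0)
          = if kv v = m then n - m else 0 := by
      intro v
      by_cases hv : kv v = m
      · simp only [hv, true_and, if_true]
        have : (∑ i : Fin n, if v i = false then (1:ℕ) else 0)
            = (Finset.univ.filter fun i => v i = false).card := by
          rw [Finset.card_filter]
        rw [this]
        have hsplit := Finset.card_filter_add_card_filter_not
          (s := (Finset.univ : Finset (Fin n))) (p := fun i => v i = true)
        simp only [Finset.card_univ, Fintype.card_fin] at hsplit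
        have heq : (Finset.univ.filter fun i => ¬ v i = true)
            = (Finset.univ.filter fun i => v i = false) := by
          ext i; simp [Bool.not_eq_true]
        rw [heq] at hsplit
        have hkv : (Finset.univ.filter fun i => v i = true).card = m := hv
        omega
      · simp [hv]
    rw [Finset.sum_congr rfl fun v _ => hinner v]
    rw [← Finset.sum_filter, Finset.sum_const, smul_eq_mul, mul_comm]
    rfl
  have h2 : ((Finset.univ : Finset ((Fin n → Bool) × Fin n)).filter
      (fun p => kv p.1 = m + 1 ∧ p.1 p.2 = true)).card = (m + 1) * Nm n (m+1) := by
    rw [Finset.card_filter]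
    rw [Fintype.sum_prod_type]
    have hinner : ∀ v : Fin n → Bool,
        (∑ i : Fin n, if kv v = m + 1 ∧ v i = true then 1 else 0)
          = if kv v = m + 1 then m + 1 else 0 := by
      intro v
      by_cases hv : kv v = m + 1
      · simp only [hv, true_and, if_true]
        have : (∑ i : Fin n, if v i = true then (1:ℕ) else 0)
            = (Finset.univ.filter fun i => v i = true).card := by
          rw [Finset.card_filter]
        rw [this]
        exact hv
      · simp [hv]
    rw [Finset.sum_congr rfl fun v _ => hinner v]
    rw [← Finset.sum_filter, Finset.sum_const, smul_eq_mul, mul_comm]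
    rfl
  rw [← h1, ← h2]
  refine Finset.card_nbij' (fun p => (Function.update p.1 p.2 true, p.2))
    (fun p => (Function.update p.1 p.2 false, p.2)) ?_ ?_ ?_ ?_
  · intro p hp
    simp only [Finset.mem_coe, Finset.mem_filter, Finset.mem_univ, true_and] at hp ⊢
    exact ⟨by rw [kv_update_true hp.2, hp.1], by simp⟩
  · intro p hp
    simp only [Finset.mem_coe, Finset.mem_filter, Finset.mem_univ, true_and] at hp ⊢
    constructor
    · have := kv_update_false hp.2
      omega
    · simp
  · intro p hp
    simp only [Finset.mem_coe, Finset.mem_filter, Finset.mem_univ, true_and] at hp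
    have : Function.update (Function.update p.1 p.2 true) p.2 false = p.1 := by
      rw [Function.update_idem, ← hp.2, Function.update_eq_self]
    simp [this]
  · intro p hp
    simp only [Finset.mem_coe, Finset.mem_filter, Finset.mem_univ, true_and] at hp
    have : Function.update (Function.update p.1 p.2 false) p.2 true = p.1 := by
      rw [Function.update_idem, ← hp.2, Function.update_eq_self]
    simp [this]

lemma Nm_le_succ (m : ℕ) (hm : 2*m + 1 ≤ n) : Nm n m ≤ Nm n (m+1) := by
  have h := edge_count (n := n) m
  have h2 : (m+1) * Nm n m ≤ (n - m) * Nm n m := by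
    apply Nat.mul_le_mul_right
    omega
  rw [h] at h2
  exact Nat.le_of_mul_le_mul_left h2 (by omega)

lemma sum_card_eq (m : ℕ) :
    ∑ i : Fin n, ((Finset.univ : Finset (Fin n → Bool)).filter
      (fun v => kv v = m ∧ v i = true)).card = m * Nm n m := by
  classical
  have h : ∀ i : Fin n, ((Finset.univ : Finset (Fin n → Bool)).filter
      (fun v => kv v = m ∧ v i = true)).card
      = ∑ v : Fin n → Bool, if kv v = m ∧ v i = true then 1 else 0 := by
    intro i; rw [Finset.card_filter]
  rw [Finset.sum_congr rfl fun i _ => h i, Finset.sum_comm]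
  have hinner : ∀ v : Fin n → Bool,
      (∑ i : Fin n, if kv v = m ∧ v i = true then 1 else 0)
        = if kv v = m then m else 0 := by
    intro v
    by_cases hv : kv v = m
    · simp only [hv, true_and, if_true]
      have : (∑ i : Fin n, if v i = true then (1:ℕ) else 0)
          = (Finset.univ.filter fun i => v i = true).card := by
        rw [Finset.card_filter]
      rw [this]
      exact hv
    · simp [hv]
  rw [Finset.sum_congr rfl fun v _ => hinner v, ← Finset.sum_filter,
    Finset.sum_const, smul_eq_mul, mul_comm]
  rfl

end
end St17
namespace St17
open MeasureTheory Finset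
noncomputable section
variable {n m : ℕ} {ε : ℝ}

def stopHist {n : ℕ} (hist : Fin n → Option ℝ) : Prop :=
  ∃ i, ∃ y : ℝ, hist i = some y ∧ 1 ≤ y

open Classical in
/-- the policy that opens boxes `L 0, L 1, …` until a reward `≥ 1` is seen -/
def piStar {n m : ℕ} (L : Fin m → Fin n) : (Fin n → Option ℝ) → Option (Fin n) :=
  fun hist =>
    if h : (¬ stopHist hist) ∧ (Finset.univ.filter fun r : Fin m => hist (L r) = none).Nonempty
    then some (L ((Finset.univ.filter fun r : Fin m => hist (L r) = none).min' h.2))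
    else none

/-- history after opening `L 0, …, L (j-1)` with all rewards `0` -/
def hJ {n m : ℕ} (L : Fin m → Fin n) (j : ℕ) : Fin n → Option ℝ :=
  fun i => if ∃ r : Fin m, (r : ℕ) < j ∧ L r = i then some 0 else none

lemma run_of_none {π : (Fin n → Option ℝ) → Option (Fin n)} {c t : Fin n → ℝ}
    {h : Fin n → Option ℝ} (hπ : π h = none) (fuel : ℕ) :
    runPolicyAux π c t fuel h = histBest h - histPaid c h := by
  cases fuel <;> simp [runPolicyAux, hπ]

lemma hJ_not_stop (L : Fin m → Fin n) (j : ℕ) : ¬ stopHist (hJ L j) := by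
  rintro ⟨i, y, hiy, h1y⟩
  rw [hJ] at hiy
  by_cases hex : ∃ r : Fin m, (r : ℕ) < j ∧ L r = i
  · rw [if_pos hex] at hiy
    have : y = 0 := by injection hiy.symm
    linarith
  · rw [if_neg hex] at hiy; simp at hiy

lemma hJ_L_none (L : Fin m → Fin n) (hL : Function.Injective L) (j : ℕ) (r : Fin m) :
    hJ L j (L r) = none ↔ j ≤ (r : ℕ) := by
  rw [hJ]
  by_cases hex : ∃ r' : Fin m, (r' : ℕ) < j ∧ L r' = L r
  · rw [if_pos hex]
    obtain ⟨r', hr', hLr⟩ := hex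
    have heq : r' = r := hL hLr
    subst heq
    exact iff_of_false (by simp) (by omega)
  · rw [if_neg hex]
    push_neg at hex
    have := hex r
    constructor
    · intro _
      by_contra hc
      exact absurd rfl (this (by omega))
    · intro _; rfl

lemma piStar_hJ (L : Fin m → Fin n) (hL : Function.Injective L) (j : ℕ) (hj : j < m) :
    piStar L (hJ L j) = some (L ⟨j, hj⟩) := by
  have hfil : (Finset.univ.filter fun r : Fin m => hJ L j (L r) = none)
      = Finset.univ.filter fun r : Fin m => j ≤ (r : ℕ) := by
    ext r
    simp only [Finset.mem_filter, Finset.mem_univ, true_and]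
    exact hJ_L_none L hL j r
  have hne : (Finset.univ.filter fun r : Fin m => hJ L j (L r) = none).Nonempty := by
    rw [hfil]
    exact ⟨⟨j, hj⟩, by simp⟩
  rw [piStar, dif_pos ⟨hJ_not_stop L j, hne⟩]
  congr 1
  congr 1
  have hmem : (⟨j, hj⟩ : Fin m) ∈ (Finset.univ.filter fun r : Fin m => hJ L j (L r) = none) := by
    rw [hfil]; simp
  apply le_antisymm
  · exact Finset.min'_le _ _ hmem
  · apply Finset.le_min'
    intro y hy
    rw [hfil, Finset.mem_filter] at hy
    exact hy.2
lemma piStar_hJ_top (L : Fin m → Fin n) (hL : Function.Injective L) :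
    piStar L (hJ L m) = none := by
  rw [piStar, dif_neg]
  rintro ⟨-, ⟨r, hr⟩⟩
  rw [Finset.mem_filter] at hr
  have := (hJ_L_none L hL m r).1 hr.2
  omega

lemma piStar_stopped (L : Fin m → Fin n) (h : Fin n → Option ℝ) (hstop : stopHist h) :
    piStar L h = none := by
  rw [piStar, dif_neg]
  rintro ⟨hns, -⟩
  exact hns hstop

lemma hJ_zero (L : Fin m → Fin n) : hJ L 0 = fun _ => none := by
  funext i
  rw [hJ, if_neg]
  rintro ⟨r, hr, -⟩
  omega

lemma hJ_succ (L : Fin m → Fin n) (j : ℕ) (hj : j < m) :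
    hJ L (j+1) = Function.update (hJ L j) (L ⟨j, hj⟩) (some 0) := by
  funext i
  rcases eq_or_ne i (L ⟨j, hj⟩) with rfl | hne
  · rw [Function.update_self, hJ, if_pos ⟨⟨j, hj⟩, Nat.lt_succ_self j, rfl⟩]
  · rw [Function.update_of_ne hne, hJ, hJ]
    by_cases hex : ∃ r : Fin m, (r : ℕ) < j ∧ L r = i
    · obtain ⟨r, hr, hLr⟩ := hex
      rw [if_pos ⟨r, by omega, hLr⟩, if_pos ⟨r, hr, hLr⟩]
    · rw [if_neg, if_neg hex]
      rintro ⟨r, hr, hLr⟩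
      rcases Nat.lt_succ_iff_lt_or_eq.1 hr with h1 | h1
      · exact hex ⟨r, h1, hLr⟩
      · have hrr : r = ⟨j, hj⟩ := Fin.ext h1
        rw [hrr] at hLr
        exact hne hLr.symm

lemma histPaid_update (c : Fin n → ℝ) (h : Fin n → Option ℝ) (i : Fin n) (x : ℝ)
    (hi : h i = none) :
    histPaid c (Function.update h i (some x)) = histPaid c h + c i := by
  rw [histPaid_eq, histPaid_eq]
  have hfun : ∀ j, (if (Function.update h i (some x) j).isSome then c j else 0)
      = Function.update (fun j => if (h j).isSome then c j else 0) i (c i) j := by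
    intro j
    rcases eq_or_ne j i with rfl | hne
    · simp
    · rw [Function.update_of_ne hne, Function.update_of_ne hne]
  rw [Finset.sum_congr rfl fun j _ => hfun j,
    Finset.sum_update_of_mem (Finset.mem_univ i)]
  rw [← Finset.add_sum_erase Finset.univ _ (Finset.mem_univ i)]
  rw [hi]
  simp [add_comm]

lemma histBest_hJ (hn : 0 < n) (L : Fin m → Fin n) (j : ℕ) : histBest (hJ L j) = 0 := by
  haveI : Nonempty (Fin n) := ⟨⟨0, hn⟩⟩
  have : (fun i => ((hJ L j) i).getD 0) = fun _ => (0:ℝ) := by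
    funext i
    rw [hJ]
    by_cases hex : ∃ r : Fin m, (r : ℕ) < j ∧ L r = i
    · rw [if_pos hex]; rfl
    · rw [if_neg hex]; rfl
  rw [histBest, this, ciSup_const]

lemma histBest_update_one (hn : 0 < n) (L : Fin m → Fin n) (j : ℕ) (i : Fin n) :
    histBest (Function.update (hJ L j) i (some 1)) = 1 := by
  haveI : Nonempty (Fin n) := ⟨⟨0, hn⟩⟩
  apply le_antisymm
  · apply ciSup_le
    intro i'
    rcases eq_or_ne i' i with rfl | hne
    · simp
    · rw [Function.update_of_ne hne, hJ]
      by_cases hex : ∃ r : Fin m, (r : ℕ) < j ∧ L r = i'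
      · rw [if_pos hex]; norm_num
      · rw [if_neg hex]; norm_num
  · have hbdd : BddAbove (Set.range fun i' => ((Function.update (hJ L j) i (some 1)) i').getD 0) :=
      (Set.finite_range _).bddAbove
    refine le_trans ?_ (le_ciSup hbdd i)
    simp

end
end St17
namespace St17
open MeasureTheory Finset
noncomputable section
variable {n m : ℕ} {ε : ℝ}

lemma tB_update (b : Fin n → Bool) (i : Fin n) (β : Bool) :
    tB (Function.update b i β) = Function.update (tB b) i (xB β) := by
  funext j
  rcases eq_or_ne j i with rfl | hne
  · simp [tB]
  · simp [tB, Function.update_of_ne hne]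

def SumA (ε : ℝ) {n m : ℕ} (v : Fin n → Bool) (L : Fin m → Fin n) (j : ℕ) : ℝ :=
  ∑ b : Fin n → Bool,
    Wv ε v b * runPolicyAux (piStar L) (fun _ => 1/(n:ℝ)) (tB b) (n - j) (hJ L j)

lemma R_sum_one (hε : 0 < ε) (hε1 : ε < 1) (hn : 0 < n)
    (hh : (1 + ε) / (n : ℝ) < 1 / 2) (v : Fin n → Bool) (i : Fin n) :
    ∑ b ∈ Finset.univ.filter (fun b : Fin n → Bool => b i = false), Rfun ε v i b = 1 := by
  have h := pair_sum ε v i (fun _ => (1:ℝ))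
  simp only [mul_one] at h
  rw [Wv_sum_one] at h
  rw [h]
  exact Finset.sum_congr rfl fun b _ => by ring

lemma SumA_rec (hε : 0 < ε) (hε1 : ε < 1) (hn3 : 3 ≤ n)
    (hh : (1 + ε) / (n : ℝ) < 1 / 2)
    (v : Fin n → Bool) (L : Fin m → Fin n) (hL : Function.Injective L)
    (hvL : ∀ r, v (L r) = true) (hmn : m ≤ n) (j : ℕ) (hj : j < m) :
    SumA ε v L j
      = pB ε n true * (1 - (histPaid (fun _ => 1/(n:ℝ)) (hJ L j) + 1/(n:ℝ)))
        + (1 - pB ε n true) * SumA ε v L (j+1) := by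
  have hn : 0 < n := by omega
  set π := piStar L with hπdef
  set c : Fin n → ℝ := fun _ => 1/(n:ℝ) with hcdef
  set i₀ : Fin n := L ⟨j, hj⟩ with hi₀
  have hv0 : v i₀ = true := hvL _
  have hp : pB ε n (v i₀) = pB ε n true := by rw [hv0]
  have hnone : hJ L j i₀ = none := (hJ_L_none L hL j ⟨j, hj⟩).2 (le_refl j)
  have hfuel : n - j = (n - j - 1) + 1 := by omega
  have hstep : ∀ b : Fin n → Bool,
      runPolicyAux π c (tB b) (n - j) (hJ L j)
        = runPolicyAux π c (tB b) (n - j - 1)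
            (Function.update (hJ L j) i₀ (some (xB (b i₀)))) := by
    intro b
    rw [hfuel]
    have hπh : π (hJ L j) = some i₀ := piStar_hJ L hL j hj
    simp only [runPolicyAux, hπh, hnone, Option.isSome_none, Bool.false_eq_true, if_false]
    rfl
  rw [SumA, Finset.sum_congr rfl fun b _ => by rw [hstep b]]
  rw [pair_sum ε v i₀ (fun b => runPolicyAux π c (tB b) (n - j - 1)
      (Function.update (hJ L j) i₀ (some (xB (b i₀)))))]
  have hCval : ∀ b : Fin n → Bool,
      runPolicyAux π c (tB (Function.update b i₀ true)) (n - j - 1)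
        (Function.update (hJ L j) i₀ (some (xB ((Function.update b i₀ true) i₀))))
      = 1 - (histPaid c (hJ L j) + 1/(n:ℝ)) := by
    intro b
    rw [Function.update_self]
    have hstop : stopHist (Function.update (hJ L j) i₀ (some (xB true))) :=
      ⟨i₀, 1, by simp [xB], le_refl 1⟩
    rw [run_of_none (piStar_stopped L _ hstop)]
    have hb1 : histBest (Function.update (hJ L j) i₀ (some (xB true))) = 1 := by
      have := histBest_update_one hn L j i₀
      simpa [xB] using this
    have hpaid : histPaid c (Function.update (hJ L j) i₀ (some (xB true)))
        = histPaid c (hJ L j) + c i₀ := histPaid_update c _ i₀ _ hnone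
    rw [hb1, hpaid]
  have hFval : ∀ b ∈ Finset.univ.filter (fun b : Fin n → Bool => b i₀ = false),
      runPolicyAux π c (tB b) (n - j - 1)
        (Function.update (hJ L j) i₀ (some (xB (b i₀))))
      = runPolicyAux π c (tB b) (n - j - 1) (hJ L (j+1)) := by
    intro b hb
    rw [Finset.mem_filter] at hb
    rw [hb.2]
    have : Function.update (hJ L j) i₀ (some (xB false)) = hJ L (j+1) := by
      rw [hJ_succ L j hj, ← hi₀]
      norm_num [xB]
    rw [this]
  have hsome : (hJ L (j+1) i₀).isSome := by
    rw [hJ, if_pos ⟨⟨j, hj⟩, Nat.lt_succ_self j, rfl⟩]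
    rfl
  have hSA : SumA ε v L (j+1)
      = ∑ b ∈ Finset.univ.filter (fun b : Fin n → Bool => b i₀ = false),
          Rfun ε v i₀ b * runPolicyAux π c (tB b) (n - j - 1) (hJ L (j+1)) := by
    rw [SumA]
    have hnj : n - (j+1) = n - j - 1 := by omega
    rw [hnj]
    rw [pair_sum ε v i₀ (fun b => runPolicyAux π c (tB b) (n - j - 1) (hJ L (j+1)))]
    refine Finset.sum_congr rfl fun b hb => ?_
    have hinv : runPolicyAux π c (tB (Function.update b i₀ true)) (n - j - 1) (hJ L (j+1))
        = runPolicyAux π c (tB b) (n - j - 1) (hJ L (j+1)) := by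
      rw [tB_update]
      exact (run_read_indep π c (tB b) i₀ (xB true) (n - j - 1) (hJ L (j+1)) hsome).symm
    rw [hinv, hp]
    ring
  have hR1 := R_sum_one hε hε1 hn hh v i₀
  rw [hSA]
  rw [Finset.sum_congr rfl fun b hb => by rw [hCval b, hFval b hb, hp]]
  have hgoal : ∑ b ∈ Finset.univ.filter (fun b : Fin n → Bool => b i₀ = false),
      Rfun ε v i₀ b * ((1 - pB ε n true) * runPolicyAux π c (tB b) (n - j - 1) (hJ L (j+1))
        + pB ε n true * (1 - (histPaid c (hJ L j) + 1/(n:ℝ))))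
      = (1 - pB ε n true) * (∑ b ∈ Finset.univ.filter (fun b : Fin n → Bool => b i₀ = false),
          Rfun ε v i₀ b * runPolicyAux π c (tB b) (n - j - 1) (hJ L (j+1)))
        + (pB ε n true * (1 - (histPaid c (hJ L j) + 1/(n:ℝ)))) *
          (∑ b ∈ Finset.univ.filter (fun b : Fin n → Bool => b i₀ = false), Rfun ε v i₀ b) := by
    rw [Finset.mul_sum, Finset.mul_sum, ← Finset.sum_add_distrib]
    exact Finset.sum_congr rfl fun b _ => by ring
  rw [hgoal, hR1, mul_one]
  ring

lemma SumA_top (hε : 0 < ε) (hε1 : ε < 1) (hn : 0 < n)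
    (hh : (1 + ε) / (n : ℝ) < 1 / 2)
    (v : Fin n → Bool) (L : Fin m → Fin n) (hL : Function.Injective L) :
    SumA ε v L m = - histPaid (fun _ => 1/(n:ℝ)) (hJ L m) := by
  rw [SumA]
  have hconst : ∀ b : Fin n → Bool,
      runPolicyAux (piStar L) (fun _ => 1/(n:ℝ)) (tB b) (n - m) (hJ L m)
      = - histPaid (fun _ => 1/(n:ℝ)) (hJ L m) := by
    intro b
    rw [run_of_none (piStar_hJ_top L hL), histBest_hJ hn L m]
    ring
  rw [Finset.sum_congr rfl fun b _ => by rw [hconst b], ← Finset.sum_mul, Wv_sum_one, one_mul]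

lemma SumA_formula (hε : 0 < ε) (hε1 : ε < 1) (hn3 : 3 ≤ n)
    (hh : (1 + ε) / (n : ℝ) < 1 / 2)
    (v : Fin n → Bool) (L : Fin m → Fin n) (hL : Function.Injective L)
    (hvL : ∀ r, v (L r) = true) (hmn : m ≤ n) :
    ∀ d j, j + d = m →
      SumA ε v L j = (1 - (1 - pB ε n true)^d) * (1 - 1/((n:ℝ) * pB ε n true))
        - histPaid (fun _ => 1/(n:ℝ)) (hJ L j) := by
  have hn : 0 < n := by omega
  have hnR : (0:ℝ) < n := by exact_mod_cast hn
  have hppos : 0 < pB ε n true := pB_pos hε hε1 hn true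
  have hZ : pB ε n true * (1/((n:ℝ) * pB ε n true)) = 1/(n:ℝ) := by
    field_simp
  intro d
  induction d with
  | zero =>
    intro j hj
    have : j = m := by omega
    subst this
    rw [SumA_top hε hε1 hn hh v L hL]
    simp
  | succ d ih =>
    intro j hj
    have hjm : j < m := by omega
    have hrec := SumA_rec hε hε1 hn3 hh v L hL hvL hmn j hjm
    have hih := ih (j+1) (by omega)
    have hpaid : histPaid (fun _ => 1/(n:ℝ)) (hJ L (j+1))
        = histPaid (fun _ => 1/(n:ℝ)) (hJ L j) + 1/(n:ℝ) := by
      rw [hJ_succ L j hjm]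
      have hnone : hJ L j (L ⟨j, hjm⟩) = none := (hJ_L_none L hL j ⟨j, hjm⟩).2 (le_refl j)
      have h0 : (some (0:ℝ)) = some (xB false) := by norm_num [xB]
      rw [histPaid_update _ _ _ _ hnone]
    rw [hrec, hih, hpaid, pow_succ]
    set p := pB ε n true
    set Pay := histPaid (fun _ => 1/(n:ℝ)) (hJ L j)
    linear_combination hZ

end
end St17
namespace St17
open MeasureTheory Finset
noncomputable section
variable {n m : ℕ} {ε : ℝ}

lemma histPaid_none (c : Fin n → ℝ) : histPaid c (fun _ => none) = 0 := by
  rw [histPaid_eq]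
  simp

lemma one_sub_pow_ge (p : ℝ) (m : ℕ) (hp0 : 0 ≤ p) (hp1 : p ≤ 1) :
    (m:ℝ) * p / (1 + (m:ℝ) * p) ≤ 1 - (1 - p)^m := by
  have hmp0 : (0:ℝ) ≤ (m:ℝ) * p := by positivity
  have h1mp : (0:ℝ) < 1 + (m:ℝ) * p := by linarith
  have hq1 : (1 - p) ≤ 1 / (1 + p) := by
    rw [le_div_iff₀ (by linarith)]
    nlinarith
  have hq0 : (0:ℝ) ≤ 1 - p := by linarith
  have hpow : (1 - p)^m ≤ (1 / (1 + p))^m := pow_le_pow_left₀ hq0 hq1 m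
  have hber : 1 + (m:ℝ) * p ≤ (1 + p)^m := by
    have := one_add_mul_le_pow (show (-2:ℝ) ≤ p by linarith) m
    linarith
  have hpos : (0:ℝ) < (1 + p)^m := by positivity
  have h2 : (1 / (1 + p))^m ≤ 1 / (1 + (m:ℝ) * p) := by
    rw [div_pow, one_pow]
    exact div_le_div_of_nonneg_left (by norm_num) h1mp hber
  have h3 : (1 - p)^m ≤ 1 / (1 + (m:ℝ) * p) := hpow.trans h2
  have h4 : (m:ℝ) * p / (1 + (m:ℝ) * p) = 1 - 1 / (1 + (m:ℝ) * p) := by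
    field_simp
    ring
  rw [h4]
  linarith

lemma pandoraOpt_ge (hε : 0 < ε) (hε1 : ε < 1) (hn3 : 3 ≤ n)
    (hh : (1 + ε) / (n : ℝ) < 1 / 2)
    (v : Fin n → Bool) (m : ℕ) (hm : m ≤ kv v)
    (hmp : (m:ℝ) * pB ε n true ≤ 1/2) :
    (2/3) * ((m:ℝ)/(n:ℝ)) * ε ≤ pandoraOpt (hardBox n ε v) (fun _ => 1/(n:ℝ)) := by
  have hn : 0 < n := by omega
  have hnR : (0:ℝ) < n := by exact_mod_cast hn
  -- extract the list of plus boxes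
  obtain ⟨t, hts, htc⟩ := Finset.exists_subset_card_eq
    (show m ≤ (Finset.univ.filter fun i => v i = true).card from hm)
  let oIso := t.orderIsoOfFin htc
  set L : Fin m → Fin n := fun r => (oIso r : Fin n) with hLdef
  have hL : Function.Injective L := by
    intro a b hab
    have : (oIso a : {x // x ∈ t}) = oIso b := Subtype.ext hab
    exact oIso.injective this
  have hvL : ∀ r, v (L r) = true := by
    intro r
    have hmem : (L r) ∈ t := (oIso r).2
    have := hts hmem
    rw [Finset.mem_filter] at this
    exact this.2
  have hmn : m ≤ n := by
    calc m = t.card := htc.symm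
      _ ≤ Finset.univ.card := Finset.card_le_card (Finset.subset_univ t)
      _ = n := by simp
  -- the value of piStar L
  have hpform := SumA_formula hε hε1 hn3 hh v L hL hvL hmn m 0 (by omega)
  have hpaid0 : histPaid (fun _ => 1/(n:ℝ)) (hJ L 0) = 0 := by
    rw [hJ_zero]
    exact histPaid_none _
  rw [hpaid0, sub_zero] at hpform
  -- the integral equals SumA 0
  have hint : ∫ t', runPolicy (piStar L) (fun _ => 1/(n:ℝ)) t' ∂(Measure.pi (hardBox n ε v))
      = SumA ε v L 0 := by
    rw [integral_pi_hardBox hε hε1 hn hh v, SumA]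
    refine Finset.sum_congr rfl fun b _ => ?_
    rw [runPolicy, Nat.sub_zero, hJ_zero]
  -- bounding the value from below
  set p := pB ε n true with hpdef
  have hppos : 0 < p := pB_pos hε hε1 hn true
  have hplt : p < 1/2 := pB_lt_half hε hn hh true
  have hnp : (n:ℝ) * p = 1 + ε := by
    rw [hpdef, pB]
    field_simp
    simp
  have hZval : 1 - 1/((n:ℝ) * p) = ε/(1+ε) := by
    rw [hnp]
    field_simp
    ring
  have hA : (m:ℝ) * p / (1 + (m:ℝ) * p) ≤ 1 - (1-p)^m :=
    one_sub_pow_ge p m hppos.le (by linarith)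
  have hA23 : (2/3) * ((m:ℝ) * p) ≤ (m:ℝ) * p / (1 + (m:ℝ) * p) := by
    have hmp0 : (0:ℝ) ≤ (m:ℝ) * p := by positivity
    have hinv : (2:ℝ)/3 ≤ 1/(1 + (m:ℝ)*p) := by
      have h1 := one_div_le_one_div_of_le (show (0:ℝ) < 1 + (m:ℝ)*p by linarith)
        (show 1 + (m:ℝ)*p ≤ 3/2 by linarith)
      calc (2:ℝ)/3 = 1/(3/2) := by norm_num
        _ ≤ 1/(1 + (m:ℝ)*p) := h1
    calc (2/3) * ((m:ℝ) * p) ≤ (1/(1 + (m:ℝ)*p)) * ((m:ℝ)*p) :=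
          mul_le_mul_of_nonneg_right hinv hmp0
      _ = (m:ℝ) * p / (1 + (m:ℝ)*p) := by ring
  have hZ0 : (0:ℝ) ≤ ε/(1+ε) := by positivity
  have hval : (2/3) * ((m:ℝ)/(n:ℝ)) * ε ≤ SumA ε v L 0 := by
    rw [hpform, hZval]
    have h1 : (2/3) * ((m:ℝ) * p) * (ε/(1+ε)) ≤ (1 - (1-p)^m) * (ε/(1+ε)) :=
      mul_le_mul_of_nonneg_right (hA23.trans hA) hZ0
    have h2 : (2/3) * ((m:ℝ)/(n:ℝ)) * ε = (2/3) * ((m:ℝ) * ((1+ε)/n)) * (ε/(1+ε)) := by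
      field_simp
    rw [h2]
    have hp' : p = (1+ε)/n := by rw [hpdef, pB]; norm_num
    rw [← hp']
    exact h1
  -- pandoraOpt is at least the value of piStar L
  have hbdd : BddAbove (Set.range fun π : (Fin n → Option ℝ) → Option (Fin n) =>
      ∫ t', runPolicy π (fun _ => 1/(n:ℝ)) t' ∂(Measure.pi (hardBox n ε v))) := by
    refine ⟨1, ?_⟩
    rintro x ⟨π, rfl⟩
    dsimp only
    rw [integral_pi_hardBox hε hε1 hn hh v]
    calc ∑ b : Fin n → Bool, Wv ε v b * runPolicy π (fun _ => 1/(n:ℝ)) (tB b)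
        ≤ ∑ b : Fin n → Bool, Wv ε v b * 1 := by
          refine Finset.sum_le_sum fun b _ => ?_
          refine mul_le_mul_of_nonneg_left ?_ (Wv_nonneg hε hε1 hn hh v b)
          exact run_le_one hn π (tB b) (fun j => xB_nonneg _) (fun j => xB_le_one _)
      _ = 1 := by rw [← Finset.sum_mul, Wv_sum_one, one_mul]
  have hle := le_ciSup hbdd (piStar L)
  rw [hint] at hle
  rw [pandoraOpt]
  exact hval.trans hle

end
end St17
namespace St17
open MeasureTheory Finset
noncomputable section
variable {n N : ℕ} {ε : ℝ}

def gfun {n : ℕ} (π : (Fin n → Option ℝ) → Option (Fin n)) (i : Fin n) (b : Fin n → Bool) : ℝ :=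
  if Opn π (tB b) i then 1 else 0

lemma gfun_inv (π : (Fin n → Option ℝ) → Option (Fin n)) (i : Fin n) (b : Fin n → Bool)
    (β : Bool) : gfun π i (Function.update b i β) = gfun π i b := by
  rw [gfun, gfun, tB_update, Opn_indep]

def Qhat (ε : ℝ) {n : ℕ} (π : (Fin n → Option ℝ) → Option (Fin n)) (v : Fin n → Bool)
    (i : Fin n) : ℝ :=
  ∑ b ∈ Finset.univ.filter (fun b : Fin n → Bool => b i = false),
    Rfun ε v i b * gfun π i b

lemma Rfun_nonneg (hε : 0 < ε) (hε1 : ε < 1) (hn : 0 < n)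
    (hh : (1 + ε) / (n : ℝ) < 1 / 2) (v : Fin n → Bool) (i : Fin n) (b : Fin n → Bool) :
    0 ≤ Rfun ε v i b :=
  Finset.prod_nonneg fun j _ =>
    W1_nonneg (pB_nonneg hε hε1 hn _) (pB_le_one hε hn hh _) _

lemma gfun_nonneg (π : (Fin n → Option ℝ) → Option (Fin n)) (i : Fin n) (b : Fin n → Bool) :
    0 ≤ gfun π i b := by
  rw [gfun]; split <;> norm_num

lemma gfun_le_one (π : (Fin n → Option ℝ) → Option (Fin n)) (i : Fin n) (b : Fin n → Bool) :
    gfun π i b ≤ 1 := by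
  rw [gfun]; split <;> norm_num

lemma Qhat_nonneg (hε : 0 < ε) (hε1 : ε < 1) (hn : 0 < n)
    (hh : (1 + ε) / (n : ℝ) < 1 / 2) (π : (Fin n → Option ℝ) → Option (Fin n))
    (v : Fin n → Bool) (i : Fin n) : 0 ≤ Qhat ε π v i :=
  Finset.sum_nonneg fun b _ =>
    mul_nonneg (Rfun_nonneg hε hε1 hn hh v i b) (gfun_nonneg π i b)

lemma Qhat_le_one (hε : 0 < ε) (hε1 : ε < 1) (hn : 0 < n)
    (hh : (1 + ε) / (n : ℝ) < 1 / 2) (π : (Fin n → Option ℝ) → Option (Fin n))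
    (v : Fin n → Bool) (i : Fin n) : Qhat ε π v i ≤ 1 := by
  rw [Qhat, ← R_sum_one hε hε1 hn hh v i]
  refine Finset.sum_le_sum fun b _ => ?_
  calc Rfun ε v i b * gfun π i b ≤ Rfun ε v i b * 1 :=
        mul_le_mul_of_nonneg_left (gfun_le_one π i b) (Rfun_nonneg hε hε1 hn hh v i b)
    _ = Rfun ε v i b := mul_one _

lemma Qhat_indep (π : (Fin n → Option ℝ) → Option (Fin n)) (v : Fin n → Bool)
    (i : Fin n) (u : Bool) : Qhat ε π (Function.update v i u) i = Qhat ε π v i := by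
  rw [Qhat, Qhat]
  exact Finset.sum_congr rfl fun b _ => by rw [Rfun_update_left]

/-- expected-value factorization over coordinate `i` -/
lemma factor_out (hε : 0 < ε) (hε1 : ε < 1) (hn : 0 < n)
    (hh : (1 + ε) / (n : ℝ) < 1 / 2) (π : (Fin n → Option ℝ) → Option (Fin n))
    (v : Fin n → Bool) (i : Fin n) (a : ℝ) :
    ∑ b : Fin n → Bool, Wv ε v b * (gfun π i b * (xB (b i) - a))
      = (pB ε n (v i) - a) * Qhat ε π v i := by
  rw [pair_sum ε v i (fun b => gfun π i b * (xB (b i) - a)), Qhat, Finset.mul_sum]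
  refine Finset.sum_congr rfl fun b hb => ?_
  rw [Finset.mem_filter] at hb
  rw [gfun_inv, Function.update_self, hb.2]
  simp only [xB, if_true, Bool.false_eq_true, if_false]
  ring

lemma sum_Wv_g (hε : 0 < ε) (hε1 : ε < 1) (hn : 0 < n)
    (hh : (1 + ε) / (n : ℝ) < 1 / 2) (π : (Fin n → Option ℝ) → Option (Fin n))
    (v : Fin n → Bool) (i : Fin n) :
    ∑ b : Fin n → Bool, Wv ε v b * gfun π i b = Qhat ε π v i := by
  rw [pair_sum ε v i (fun b => gfun π i b), Qhat]
  refine Finset.sum_congr rfl fun b hb => ?_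
  rw [gfun_inv]
  ring

lemma ei_eq (v : Fin n → Bool) (i : Fin n) :
    pB ε n (v i) - 1/(n:ℝ) = (if v i then ε else -ε)/(n:ℝ) := by
  cases hvi : v i <;> simp only [pB, hvi, if_true, Bool.false_eq_true, if_false] <;> ring

/-- single-instance value bound for a fixed policy -/
lemma val_le (hε : 0 < ε) (hε1 : ε < 1) (hn : 0 < n)
    (hh : (1 + ε) / (n : ℝ) < 1 / 2) (π : (Fin n → Option ℝ) → Option (Fin n))
    (v : Fin n → Bool) :
    ∑ b : Fin n → Bool, Wv ε v b * runPolicy π (fun _ => 1/(n:ℝ)) (tB b)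
      ≤ ∑ i, ((if v i then ε else -ε)/(n:ℝ)) * Qhat ε π v i := by
  have step1 : ∑ b : Fin n → Bool, Wv ε v b * runPolicy π (fun _ => 1/(n:ℝ)) (tB b)
      ≤ ∑ b : Fin n → Bool, Wv ε v b *
          (∑ i, gfun π i b * (xB (b i) - 1/(n:ℝ))) := by
    refine Finset.sum_le_sum fun b _ => ?_
    refine mul_le_mul_of_nonneg_left ?_ (Wv_nonneg hε hε1 hn hh v b)
    have h := run_le_sum hn π (tB b) (fun j => xB_nonneg _)
    calc runPolicy π (fun _ => 1/(n:ℝ)) (tB b)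
        ≤ ∑ i, if Opn π (tB b) i then tB b i - 1/(n:ℝ) else 0 := h
      _ = ∑ i, gfun π i b * (xB (b i) - 1/(n:ℝ)) := by
          refine Finset.sum_congr rfl fun i _ => ?_
          rw [gfun]
          split <;> simp [tB]
  refine step1.trans ?_
  have step2 : ∑ b : Fin n → Bool, Wv ε v b *
      (∑ i, gfun π i b * (xB (b i) - 1/(n:ℝ)))
      = ∑ i, ∑ b : Fin n → Bool, Wv ε v b * (gfun π i b * (xB (b i) - 1/(n:ℝ))) := by
    rw [Finset.sum_congr rfl fun b (_ : b ∈ Finset.univ) =>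
      Finset.mul_sum Finset.univ (fun i => gfun π i b * (xB (b i) - 1/(n:ℝ))) (Wv ε v b)]
    exact Finset.sum_comm
  rw [step2]
  refine le_of_eq (Finset.sum_congr rfl fun i _ => ?_)
  rw [factor_out hε hε1 hn hh π v i (1/(n:ℝ)), ei_eq]

end
end St17
namespace St17
open MeasureTheory Finset
noncomputable section
variable {n N : ℕ} {ε : ℝ}

def Phi (ε : ℝ) {n N : ℕ} (P : (Fin N → Fin n → ℝ) → ((Fin n → Option ℝ) → Option (Fin n)))
    (v : Fin n → Bool) (i : Fin n) : ℝ :=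
  ∑ S : Fin N → Fin n → Bool, WS ε v S * Qhat ε (P (sB S)) v i

lemma Phi_nonneg (hε : 0 < ε) (hε1 : ε < 1) (hn : 0 < n)
    (hh : (1 + ε) / (n : ℝ) < 1 / 2)
    (P : (Fin N → Fin n → ℝ) → ((Fin n → Option ℝ) → Option (Fin n)))
    (v : Fin n → Bool) (i : Fin n) : 0 ≤ Phi ε P v i :=
  Finset.sum_nonneg fun S _ => mul_nonneg (WS_nonneg hε hε1 hn hh v S)
    (Qhat_nonneg hε hε1 hn hh _ v i)

lemma Phi_le_one (hε : 0 < ε) (hε1 : ε < 1) (hn : 0 < n)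
    (hh : (1 + ε) / (n : ℝ) < 1 / 2)
    (P : (Fin N → Fin n → ℝ) → ((Fin n → Option ℝ) → Option (Fin n)))
    (v : Fin n → Bool) (i : Fin n) : Phi ε P v i ≤ 1 := by
  rw [Phi, ← WS_sum_one (ε := ε) (N := N) v]
  refine Finset.sum_le_sum fun S _ => ?_
  calc WS ε v S * Qhat ε (P (sB S)) v i ≤ WS ε v S * 1 :=
        mul_le_mul_of_nonneg_left (Qhat_le_one hε hε1 hn hh _ v i)
          (WS_nonneg hε hε1 hn hh v S)
    _ = WS ε v S := mul_one _

lemma Phi_flip (hε : 0 < ε) (hε1 : ε < 1) (hn3 : 3 ≤ n)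
    (hh : (1 + ε) / (n : ℝ) < 1 / 2)
    (hNc : 12 * (N:ℝ) * ε^2 / n ≤ 1/10000)
    (P : (Fin N → Fin n → ℝ) → ((Fin n → Option ℝ) → Option (Fin n)))
    (v : Fin n → Bool) (i : Fin n) (hvi : v i = true) :
    Phi ε P v i - Phi ε P (Function.update v i false) i ≤ 1/100 := by
  have hn : 0 < n := by omega
  set v' := Function.update v i false with hv'
  have hQ : ∀ S : Fin N → Fin n → Bool,
      Qhat ε (P (sB S)) v' i = Qhat ε (P (sB S)) v i := fun S => Qhat_indep _ _ _ _
  have hdiff : Phi ε P v i - Phi ε P v' i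
      = ∑ S : Fin N → Fin n → Bool, (WS ε v S - WS ε v' S) * Qhat ε (P (sB S)) v i := by
    rw [Phi, Phi, ← Finset.sum_sub_distrib]
    refine Finset.sum_congr rfl fun S _ => ?_
    rw [hQ S]
    ring
  rw [hdiff]
  have htv : ∑ S : Fin N → Fin n → Bool, |WS ε v S - WS ε v' S| ≤ 1/100 := by
    refine tv_bound hε hε1 hn3 hh hNc v v' i (fun j hj => ?_) hvi (by simp [hv'])
    simp [hv', Function.update_apply, hj]
  refine le_trans ?_ htv
  refine Finset.sum_le_sum fun S _ => ?_
  have h0 := Qhat_nonneg hε hε1 hn hh (P (sB S)) v i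
  have h1 := Qhat_le_one hε hε1 hn hh (P (sB S)) v i
  calc (WS ε v S - WS ε v' S) * Qhat ε (P (sB S)) v i
      ≤ |WS ε v S - WS ε v' S| * Qhat ε (P (sB S)) v i :=
        mul_le_mul_of_nonneg_right (le_abs_self _) h0
    _ ≤ |WS ε v S - WS ε v' S| * 1 :=
        mul_le_mul_of_nonneg_left h1 (abs_nonneg _)
    _ = |WS ε v S - WS ε v' S| := mul_one _

lemma gReal_le (hε : 0 < ε) (hε1 : ε < 1) (hn : 0 < n)
    (hh : (1 + ε) / (n : ℝ) < 1 / 2)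
    (P : (Fin N → Fin n → ℝ) → ((Fin n → Option ℝ) → Option (Fin n)))
    (v : Fin n → Bool) :
    ∑ S : Fin N → Fin n → Bool, WS ε v S *
        (∑ b : Fin n → Bool, Wv ε v b * runPolicy (P (sB S)) (fun _ => 1/(n:ℝ)) (tB b))
      ≤ ∑ i, ((if v i then ε else -ε)/(n:ℝ)) * Phi ε P v i := by
  have step1 : ∑ S : Fin N → Fin n → Bool, WS ε v S *
      (∑ b : Fin n → Bool, Wv ε v b * runPolicy (P (sB S)) (fun _ => 1/(n:ℝ)) (tB b))
      ≤ ∑ S : Fin N → Fin n → Bool, WS ε v S *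
          (∑ i, ((if v i then ε else -ε)/(n:ℝ)) * Qhat ε (P (sB S)) v i) := by
    refine Finset.sum_le_sum fun S _ => ?_
    exact mul_le_mul_of_nonneg_left (val_le hε hε1 hn hh _ v) (WS_nonneg hε hε1 hn hh v S)
  refine step1.trans (le_of_eq ?_)
  rw [Finset.sum_congr rfl fun S (_ : S ∈ Finset.univ) =>
    Finset.mul_sum Finset.univ (fun i => ((if v i then ε else -ε)/(n:ℝ)) * Qhat ε (P (sB S)) v i) (WS ε v S)]
  rw [Finset.sum_comm]
  refine Finset.sum_congr rfl fun i _ => ?_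
  rw [Phi, Finset.mul_sum]
  exact Finset.sum_congr rfl fun S _ => by ring

/-- the core bound on the average value over the hard instances -/
lemma core_bound (hε : 0 < ε) (hε1 : ε < 1) (hn3 : 3 ≤ n)
    (hh : (1 + ε) / (n : ℝ) < 1 / 2)
    (hNc : 12 * (N:ℝ) * ε^2 / n ≤ 1/10000) (m : ℕ)
    (P : (Fin N → Fin n → ℝ) → ((Fin n → Option ℝ) → Option (Fin n))) :
    ∑ v ∈ Finset.univ.filter (fun v : Fin n → Bool => m ≤ kv v),
        (∑ S : Fin N → Fin n → Bool, WS ε v S *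
          (∑ b : Fin n → Bool, Wv ε v b * runPolicy (P (sB S)) (fun _ => 1/(n:ℝ)) (tB b)))
      ≤ ε/(n:ℝ) * ((m : ℝ) * (Nm n m : ℝ))
        + ε/100 * ((Finset.univ.filter (fun v : Fin n → Bool => m ≤ kv v)).card : ℝ) := by
  classical
  have hn : 0 < n := by omega
  have hnR : (0:ℝ) < n := by exact_mod_cast hn
  set K := Finset.univ.filter (fun v : Fin n → Bool => m ≤ kv v) with hK
  have step1 : ∑ v ∈ K, (∑ S : Fin N → Fin n → Bool, WS ε v S *
      (∑ b : Fin n → Bool, Wv ε v b * runPolicy (P (sB S)) (fun _ => 1/(n:ℝ)) (tB b)))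
      ≤ ∑ v ∈ K, ∑ i, ((if v i then ε else -ε)/(n:ℝ)) * Phi ε P v i :=
    Finset.sum_le_sum fun v _ => gReal_le hε hε1 hn hh P v
  refine step1.trans ?_
  rw [Finset.sum_comm]
  -- now bound each coordinate's contribution
  have peri : ∀ i : Fin n, ∑ v ∈ K, ((if v i then ε else -ε)/(n:ℝ)) * Phi ε P v i
      ≤ ε/(n:ℝ) * (((Finset.univ.filter (fun w : Fin n → Bool => kv w = m ∧ w i = true)).card : ℝ)
          + (K.card : ℝ)/100) := by
    intro i
    have hsplit := Finset.sum_filter_add_sum_filter_not K (fun v : Fin n → Bool => v i = true)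
      (fun v => ((if v i then ε else -ε)/(n:ℝ)) * Phi ε P v i)
    rw [← hsplit]
    have hplus : ∑ v ∈ K.filter (fun v => v i = true),
        ((if v i then ε else -ε)/(n:ℝ)) * Phi ε P v i
        = (ε/(n:ℝ)) * ∑ v ∈ K.filter (fun v => v i = true), Phi ε P v i := by
      rw [Finset.mul_sum]
      refine Finset.sum_congr rfl fun v hv => ?_
      rw [Finset.mem_filter] at hv
      rw [hv.2]
      simp
    have hminus : ∑ v ∈ K.filter (fun v => ¬ v i = true),
        ((if v i then ε else -ε)/(n:ℝ)) * Phi ε P v i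
        = -(ε/(n:ℝ)) * ∑ v ∈ K.filter (fun v => ¬ v i = true), Phi ε P v i := by
      rw [Finset.mul_sum]
      refine Finset.sum_congr rfl fun v hv => ?_
      rw [Finset.mem_filter] at hv
      rw [Bool.not_eq_true] at hv
      rw [hv.2]
      simp
      ring
    rw [hplus, hminus]
    -- the bijection for the minus part
    have hbij : ∑ v ∈ K.filter (fun v => ¬ v i = true), Phi ε P v i
        = ∑ w ∈ K.filter (fun w => w i = true ∧ m + 1 ≤ kv w),
            Phi ε P (Function.update w i false) i := by
      refine Finset.sum_nbij' (fun v => Function.update v i true)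
        (fun w => Function.update w i false) ?_ ?_ ?_ ?_ ?_
      · intro v hv
        simp only [hK, Finset.mem_filter, Finset.mem_univ, true_and] at hv ⊢
        obtain ⟨hkv, hvi⟩ := hv
        rw [Bool.not_eq_true] at hvi
        have hkup := kv_update_true hvi
        exact ⟨by omega, by simp, by omega⟩
      · intro w hw
        simp only [hK, Finset.mem_filter, Finset.mem_univ, true_and] at hw ⊢
        obtain ⟨hkw, hwi, hkw1⟩ := hw
        have hkdown := kv_update_false hwi
        refine ⟨by omega, by simp⟩
      · intro v hv
        simp only [hK, Finset.mem_filter, Finset.mem_univ, true_and] at hv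
        show Function.update (Function.update v i true) i false = v
        rw [Function.update_idem]
        rw [Bool.not_eq_true] at hv
        rw [← hv.2, Function.update_eq_self]
      · intro w hw
        simp only [hK, Finset.mem_filter, Finset.mem_univ, true_and] at hw
        show Function.update (Function.update w i false) i true = w
        rw [Function.update_idem, ← hw.2.1, Function.update_eq_self]
      · intro v hv
        simp only [hK, Finset.mem_filter, Finset.mem_univ, true_and] at hv
        rw [Bool.not_eq_true] at hv
        show Phi ε P v i = Phi ε P (Function.update (Function.update v i true) i false) i
        rw [Function.update_idem, ← hv.2, Function.update_eq_self]
    rw [hbij]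
    -- split the plus part
    have hsplit2 := Finset.sum_filter_add_sum_filter_not (K.filter (fun v => v i = true))
      (fun v : Fin n → Bool => m + 1 ≤ kv v) (fun v => Phi ε P v i)
    have hTeq : (K.filter (fun v => v i = true)).filter (fun v : Fin n → Bool => m + 1 ≤ kv v)
        = K.filter (fun w => w i = true ∧ m + 1 ≤ kv w) := by
      rw [Finset.filter_filter]
    have hBeq : (K.filter (fun v => v i = true)).filter (fun v : Fin n → Bool => ¬ (m + 1 ≤ kv v))
        = Finset.univ.filter (fun w : Fin n → Bool => kv w = m ∧ w i = true) := by
      rw [Finset.filter_filter, hK, Finset.filter_filter]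
      ext w
      simp only [Finset.mem_filter, Finset.mem_univ, true_and]
      constructor
      · rintro ⟨h1, h2, h3⟩; exact ⟨by omega, h2⟩
      · rintro ⟨h1, h2⟩; exact ⟨by omega, h2, by omega⟩
    rw [← hsplit2, hTeq, hBeq]
    -- bound the two pieces
    have hb1 : ∑ w ∈ K.filter (fun w => w i = true ∧ m + 1 ≤ kv w),
        (Phi ε P w i - Phi ε P (Function.update w i false) i)
        ≤ (K.card : ℝ) / 100 := by
      have hcard : ((K.filter (fun w => w i = true ∧ m + 1 ≤ kv w)).card : ℝ) ≤ (K.card : ℝ) := by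
        exact_mod_cast Finset.card_le_card (Finset.filter_subset _ _)
      calc ∑ w ∈ K.filter (fun w => w i = true ∧ m + 1 ≤ kv w),
            (Phi ε P w i - Phi ε P (Function.update w i false) i)
          ≤ ∑ w ∈ K.filter (fun w => w i = true ∧ m + 1 ≤ kv w), (1/100 : ℝ) := by
            refine Finset.sum_le_sum fun w hw => ?_
            rw [Finset.mem_filter] at hw
            exact Phi_flip hε hε1 hn3 hh hNc P w i hw.2.1
        _ = ((K.filter (fun w => w i = true ∧ m + 1 ≤ kv w)).card : ℝ) * (1/100) := by
            rw [Finset.sum_const, nsmul_eq_mul]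
        _ ≤ (K.card : ℝ) / 100 := by linarith
    have hb2 : ∑ w ∈ Finset.univ.filter (fun w : Fin n → Bool => kv w = m ∧ w i = true),
        Phi ε P w i
        ≤ ((Finset.univ.filter (fun w : Fin n → Bool => kv w = m ∧ w i = true)).card : ℝ) := by
      calc ∑ w ∈ Finset.univ.filter (fun w : Fin n → Bool => kv w = m ∧ w i = true), Phi ε P w i
          ≤ ∑ w ∈ Finset.univ.filter (fun w : Fin n → Bool => kv w = m ∧ w i = true), (1:ℝ) :=
            Finset.sum_le_sum fun w _ => Phi_le_one hε hε1 hn hh P w i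
        _ = _ := by rw [Finset.sum_const, nsmul_eq_mul, mul_one]
    have heps : (0:ℝ) ≤ ε/(n:ℝ) := by positivity
    have hcomb : (ε/(n:ℝ)) * (∑ w ∈ K.filter (fun w => w i = true ∧ m + 1 ≤ kv w), Phi ε P w i
          + ∑ w ∈ Finset.univ.filter (fun w : Fin n → Bool => kv w = m ∧ w i = true), Phi ε P w i)
        + (-(ε/(n:ℝ))) * ∑ w ∈ K.filter (fun w => w i = true ∧ m + 1 ≤ kv w),
            Phi ε P (Function.update w i false) i
        = (ε/(n:ℝ)) * (∑ w ∈ K.filter (fun w => w i = true ∧ m + 1 ≤ kv w),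
              (Phi ε P w i - Phi ε P (Function.update w i false) i)
            + ∑ w ∈ Finset.univ.filter (fun w : Fin n → Bool => kv w = m ∧ w i = true),
              Phi ε P w i) := by
      rw [Finset.sum_sub_distrib]
      ring
    rw [hcomb]
    have hsum : ∑ w ∈ K.filter (fun w => w i = true ∧ m + 1 ≤ kv w),
          (Phi ε P w i - Phi ε P (Function.update w i false) i)
        + ∑ w ∈ Finset.univ.filter (fun w : Fin n → Bool => kv w = m ∧ w i = true), Phi ε P w i
        ≤ ((Finset.univ.filter (fun w : Fin n → Bool => kv w = m ∧ w i = true)).card : ℝ)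
          + (K.card : ℝ)/100 := by linarith
    exact mul_le_mul_of_nonneg_left hsum heps
  calc ∑ i, ∑ v ∈ K, ((if v i then ε else -ε)/(n:ℝ)) * Phi ε P v i
      ≤ ∑ i : Fin n, ε/(n:ℝ) *
          (((Finset.univ.filter (fun w : Fin n → Bool => kv w = m ∧ w i = true)).card : ℝ)
            + (K.card : ℝ)/100) :=
        Finset.sum_le_sum fun i _ => peri i
    _ = ε/(n:ℝ) * ((m : ℝ) * (Nm n m : ℝ)) + ε/100 * (K.card : ℝ) := by
        rw [← Finset.mul_sum, Finset.sum_add_distrib, Finset.sum_const]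
        have hcc : ∑ i : Fin n,
            ((Finset.univ.filter (fun w : Fin n → Bool => kv w = m ∧ w i = true)).card : ℝ)
            = (m : ℝ) * (Nm n m : ℝ) := by
          rw [← Nat.cast_sum]
          rw [sum_card_eq m]
          push_cast
          ring
        rw [hcc]
        simp only [Finset.card_univ, Fintype.card_fin, nsmul_eq_mul]
        field_simp
end
end St17
namespace St17
open MeasureTheory Finset
noncomputable section

lemma numeric_hNc {n N : ℕ} {ε : ℝ} (hε : 0 < ε) (hnR : (0:ℝ) < n)
    (hN : (N:ℝ) ≤ 1/120000 * n / ε^2) : 12 * (N:ℝ) * ε^2 / n ≤ 1/10000 := by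
  have hε2 : (0:ℝ) < ε^2 := by positivity
  have h1 : (N:ℝ) * ε^2 ≤ 1/120000 * n := by
    have h2 := mul_le_mul_of_nonneg_right hN hε2.le
    rwa [div_mul_cancel₀ _ (ne_of_gt hε2)] at h2
  rw [div_le_iff₀ hnR]
  nlinarith

lemma numeric_final {Kc Nmr x ε : ℝ} (hK1 : 1 ≤ Kc) (hNm : 2*Nmr ≤ Kc) (hNm0 : 0 ≤ Nmr)
    (hx : 1/8 ≤ x) (hε : 0 < ε)
    (hchain : Kc * ((2/3)*x*ε - ε/200) < ε*x*Nmr + ε/100*Kc) : False := by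
  have hx0 : 0 ≤ x := by linarith
  have h1 : ε*x*Nmr ≤ ε*x*(Kc/2) :=
    mul_le_mul_of_nonneg_left (by linarith) (by positivity)
  have h2 : (0:ℝ) < ε * Kc := mul_pos hε (by linarith)
  have h3 := mul_le_mul_of_nonneg_right hx h2.le
  nlinarith

lemma kv_allTrue (n : ℕ) : kv (fun _ : Fin n => true) = n := by
  rw [kv]
  simp

lemma main (n : ℕ) (hn1 : 1 ≤ n) (ε : ℝ) (hε : 0 < ε) (hε1 : ε < 1)
    (hh : (1 + ε) / (n : ℝ) < 1 / 2)
    (N : ℕ) (hN : (N : ℝ) ≤ 1/120000 * (n : ℝ) / ε ^ 2)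
    (Ω : Type) [MeasurableSpace Ω] (PΩ : Measure Ω) [IsProbabilityMeasure PΩ]
    (A : Ω → (Fin N → Fin n → ℝ) → ((Fin n → Option ℝ) → Option (Fin n))) :
    ∃ v : Fin n → Bool,
      (∫ ω, ∫ s, ∫ t, runPolicy (A ω s) (fun _ => 1 / (n : ℝ)) t
            ∂(Measure.pi (hardBox n ε v))
          ∂(samples N (hardBox n ε v)) ∂PΩ)
        ≤ pandoraOpt (hardBox n ε v) (fun _ => 1 / (n : ℝ)) - (1/200) * ε := by
  classical
  by_contra hcon
  push_neg at hcon
  have hn : 0 < n := hn1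
  have hnR : (0:ℝ) < n := by exact_mod_cast hn
  have hn3 : 3 ≤ n := by
    by_contra hc
    push_neg at hc
    have hnR2 : (n:ℝ) ≤ 2 := by exact_mod_cast (by omega : n ≤ 2)
    rw [div_lt_div_iff₀ hnR (by norm_num)] at hh
    linarith
  have hNc : 12 * (N:ℝ) * ε^2 / n ≤ 1/10000 := numeric_hNc hε hnR hN
  -- the threshold m
  set m : ℕ := (n + 7) / 8 with hm
  have hm1 : 1 ≤ m := by omega
  have hm8 : n ≤ 8 * m := by omega
  have h2m : 2 * m + 1 ≤ n := by omega
  have hmn : m ≤ n := by omega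
  have hmnR : (1:ℝ)/8 ≤ (m:ℝ)/(n:ℝ) := by
    rw [div_le_div_iff₀ (by norm_num) hnR]
    have : (n:ℝ) ≤ 8 * m := by exact_mod_cast hm8
    linarith
  have hmnR1 : (m:ℝ)/(n:ℝ) ≤ 1 := by
    rw [div_le_one hnR]
    exact_mod_cast hmn
  have hpval : pB ε n true = (1+ε)/n := by rw [pB]; norm_num
  have hmp : (m:ℝ) * pB ε n true ≤ 1/2 := by
    have hppos := pB_pos hε hε1 hn true
    have hplt := pB_lt_half hε hn hh true
    rcases eq_or_lt_of_le hm1 with heq | hgt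
    · rw [← heq]
      push_cast
      linarith
    · have hn9 : 9 ≤ n := by omega
      have hn9R : (9:ℝ) ≤ n := by exact_mod_cast hn9
      have hm78 : (8:ℝ) * m ≤ (n:ℝ) + 7 := by
        have : 8 * m ≤ n + 7 := by omega
        exact_mod_cast this
      rw [hpval, ← mul_div_assoc, div_le_iff₀ hnR]
      nlinarith
  -- the set of hard instances
  set K : Finset (Fin n → Bool) := Finset.univ.filter (fun v : Fin n → Bool => m ≤ kv v)
    with hK
  have hKne : K.Nonempty := by
    refine ⟨fun _ => true, ?_⟩
    rw [hK, Finset.mem_filter]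
    exact ⟨Finset.mem_univ _, by rw [kv_allTrue]; omega⟩
  have hKc1 : (1:ℝ) ≤ (K.card : ℝ) := by
    have := Finset.card_pos.2 hKne
    exact_mod_cast this
  -- Opt lower bound on K
  have hOpt : ∀ v ∈ K, (2/3) * ((m:ℝ)/(n:ℝ)) * ε
      ≤ pandoraOpt (hardBox n ε v) (fun _ => 1 / (n : ℝ)) := by
    intro v hv
    rw [hK, Finset.mem_filter] at hv
    exact pandoraOpt_ge hε hε1 hn3 hh v m hv.2 hmp
  have hmargin : 0 < (2/3) * ((m:ℝ)/(n:ℝ)) * ε - (1/200) * ε := by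
    nlinarith
  -- the (finite-sum form of the) expected value of the learned policy
  have hgEq : ∀ (v : Fin n → Bool) (ω : Ω),
      (∫ s, ∫ t, runPolicy (A ω s) (fun _ => 1 / (n : ℝ)) t
          ∂(Measure.pi (hardBox n ε v)) ∂(samples N (hardBox n ε v)))
      = ∑ S : Fin N → Fin n → Bool, WS ε v S *
          (∑ b : Fin n → Bool, Wv ε v b *
            runPolicy (A ω (sB S)) (fun _ => 1 / (n : ℝ)) (tB b)) := by
    intro v ω
    rw [integral_samples hε hε1 hn hh v
      (fun s => ∫ t, runPolicy (A ω s) (fun _ => 1 / (n : ℝ)) t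
        ∂(Measure.pi (hardBox n ε v)))]
    exact Finset.sum_congr rfl fun S _ => by
      rw [integral_pi_hardBox hε hε1 hn hh v]
  -- each instance's outer integrand is integrable
  have hInt : ∀ v ∈ K, Integrable (fun ω =>
      ∫ s, ∫ t, runPolicy (A ω s) (fun _ => 1 / (n : ℝ)) t
        ∂(Measure.pi (hardBox n ε v)) ∂(samples N (hardBox n ε v))) PΩ := by
    intro v hv
    by_contra hni
    have h0 := integral_undef hni
    have hlt := hcon v
    rw [h0] at hlt
    have := hOpt v hv
    linarith
  -- swap sum and integral
  have hswap : ∑ v ∈ K, (∫ ω, ∫ s, ∫ t, runPolicy (A ω s) (fun _ => 1 / (n : ℝ)) t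
        ∂(Measure.pi (hardBox n ε v)) ∂(samples N (hardBox n ε v)) ∂PΩ)
      = ∫ ω, ∑ v ∈ K, (∫ s, ∫ t, runPolicy (A ω s) (fun _ => 1 / (n : ℝ)) t
        ∂(Measure.pi (hardBox n ε v)) ∂(samples N (hardBox n ε v))) ∂PΩ :=
    (integral_finset_sum K hInt).symm
  -- the pointwise bound
  set B : ℝ := ε/(n:ℝ) * ((m : ℝ) * (Nm n m : ℝ)) + ε/100 * (K.card : ℝ) with hB
  have hpoint : ∀ ω : Ω, ∑ v ∈ K, (∫ s, ∫ t, runPolicy (A ω s) (fun _ => 1 / (n : ℝ)) t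
      ∂(Measure.pi (hardBox n ε v)) ∂(samples N (hardBox n ε v))) ≤ B := by
    intro ω
    rw [Finset.sum_congr rfl fun v _ => hgEq v ω]
    exact core_bound hε hε1 hn3 hh hNc m (A ω)
  have hub : ∫ ω, ∑ v ∈ K, (∫ s, ∫ t, runPolicy (A ω s) (fun _ => 1 / (n : ℝ)) t
      ∂(Measure.pi (hardBox n ε v)) ∂(samples N (hardBox n ε v))) ∂PΩ ≤ B := by
    calc ∫ ω, ∑ v ∈ K, (∫ s, ∫ t, runPolicy (A ω s) (fun _ => 1 / (n : ℝ)) t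
        ∂(Measure.pi (hardBox n ε v)) ∂(samples N (hardBox n ε v))) ∂PΩ
        ≤ ∫ _ω, B ∂PΩ :=
          integral_mono (integrable_finset_sum K hInt) (integrable_const B) hpoint
      _ = B := by rw [integral_const]; simp
  -- the strict chain
  have hstrict : ∑ v ∈ K, (pandoraOpt (hardBox n ε v) (fun _ => 1 / (n : ℝ)) - (1/200) * ε)
      < ∑ v ∈ K, (∫ ω, ∫ s, ∫ t, runPolicy (A ω s) (fun _ => 1 / (n : ℝ)) t
        ∂(Measure.pi (hardBox n ε v)) ∂(samples N (hardBox n ε v)) ∂PΩ) :=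
    Finset.sum_lt_sum_of_nonempty hKne fun v _ => hcon v
  have hlower : (K.card : ℝ) * ((2/3) * ((m:ℝ)/(n:ℝ)) * ε - (1/200) * ε)
      ≤ ∑ v ∈ K, (pandoraOpt (hardBox n ε v) (fun _ => 1 / (n : ℝ)) - (1/200) * ε) := by
    calc (K.card : ℝ) * ((2/3) * ((m:ℝ)/(n:ℝ)) * ε - (1/200) * ε)
        = ∑ _v ∈ K, ((2/3) * ((m:ℝ)/(n:ℝ)) * ε - (1/200) * ε) := by
          rw [Finset.sum_const, nsmul_eq_mul]
      _ ≤ _ := Finset.sum_le_sum fun v hv => by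
          have := hOpt v hv
          linarith
  -- counting: Nm n m ≤ K.card / 2
  have hNmK : 2 * Nm n m ≤ K.card := by
    have hle := Nm_le_succ (n := n) m (by omega)
    have hsub1 : (Finset.univ.filter fun v : Fin n → Bool => kv v = m) ⊆ K := by
      intro v hv
      rw [Finset.mem_filter] at hv
      rw [hK, Finset.mem_filter]
      exact ⟨Finset.mem_univ _, by omega⟩
    have hsub2 : (Finset.univ.filter fun v : Fin n → Bool => kv v = m + 1) ⊆ K := by
      intro v hv
      rw [Finset.mem_filter] at hv
      rw [hK, Finset.mem_filter]
      exact ⟨Finset.mem_univ _, by omega⟩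
    have hdisj : Disjoint (Finset.univ.filter fun v : Fin n → Bool => kv v = m)
        (Finset.univ.filter fun v : Fin n → Bool => kv v = m + 1) := by
      rw [Finset.disjoint_left]
      intro v hv1 hv2
      rw [Finset.mem_filter] at hv1 hv2
      omega
    have hunion : (Finset.univ.filter fun v : Fin n → Bool => kv v = m)
        ∪ (Finset.univ.filter fun v : Fin n → Bool => kv v = m + 1) ⊆ K :=
      Finset.union_subset hsub1 hsub2
    have hcards := Finset.card_union_of_disjoint hdisj
    have h1 := Finset.card_le_card hunion
    rw [hcards] at h1
    have : Nm n m + Nm n (m+1) ≤ K.card := by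
      rw [Nm, Nm]
      exact h1
    omega
  -- put everything together
  have hchain : (K.card : ℝ) * ((2/3) * ((m:ℝ)/(n:ℝ)) * ε - ε/200)
      < ε * ((m:ℝ)/(n:ℝ)) * (Nm n m : ℝ) + ε/100 * (K.card : ℝ) := by
    have heq1 : ε/(n:ℝ) * ((m : ℝ) * (Nm n m : ℝ)) = ε * ((m:ℝ)/(n:ℝ)) * (Nm n m : ℝ) := by
      ring
    have := lt_of_le_of_lt hlower (lt_of_lt_of_le hstrict (hswap ▸ hub))
    rw [hB, heq1] at this
    calc (K.card : ℝ) * ((2/3) * ((m:ℝ)/(n:ℝ)) * ε - ε/200)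
        = (K.card : ℝ) * ((2/3) * ((m:ℝ)/(n:ℝ)) * ε - (1/200) * ε) := by ring
      _ < _ := this
  have hNmR : 2 * (Nm n m : ℝ) ≤ (K.card : ℝ) := by exact_mod_cast hNmK
  exact numeric_final hKc1 hNmR (by positivity) hmnR hε
    (by calc (K.card : ℝ) * ((2/3) * ((m:ℝ)/(n:ℝ)) * ε - ε/200)
          < ε * ((m:ℝ)/(n:ℝ)) * (Nm n m : ℝ) + ε/100 * (K.card : ℝ) := hchain
        _ = ε * ((m:ℝ)/(n:ℝ)) * (Nm n m : ℝ) + ε/100 * (K.card : ℝ) := rfl)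

end
end St17

theorem stmt17 :
    ∃ c c' : ℝ, 0 < c ∧ 0 < c' ∧
      ∀ n : ℕ, 1 ≤ n →
      ∀ ε : ℝ, ε ∈ Set.Ioo (0 : ℝ) 1 → (1 + ε) / (n : ℝ) < 1 / 2 →
      ∀ N : ℕ, (N : ℝ) ≤ c * (n : ℝ) / ε ^ 2 →
      ∀ (Ω : Type) [MeasurableSpace Ω] (PΩ : Measure Ω) [IsProbabilityMeasure PΩ],
      ∀ A : Ω → (Fin N → Fin n → ℝ) → ((Fin n → Option ℝ) → Option (Fin n)),
        ∃ v : Fin n → Bool,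
          (∫ ω, ∫ s, ∫ t, runPolicy (A ω s) (fun _ => 1 / (n : ℝ)) t
                ∂(Measure.pi (hardBox n ε v))
              ∂(samples N (hardBox n ε v)) ∂PΩ)
            ≤ pandoraOpt (hardBox n ε v) (fun _ => 1 / (n : ℝ)) - c' * ε := by
  refine ⟨1/120000, 1/200, by norm_num, by norm_num, ?_⟩
  intro n hn1 ε hε' hh N hN Ω _ PΩ _ A
  exact St17.main n hn1 ε hε'.1 hε'.2 hh N hN Ω PΩ A
end

section
/- Consider Pandora's problem with n boxes, each of opening cost 1/n, where each reward distribution D_i is Bernoulli on {0,1} with success probability either (1+ε)/n ('plus' box) or (1−ε)/n ('minus' box); assume (1+ε)/n < 1/2. Any deterministic policy is characterized by an ordered subsequence of boxes that it opens one by one until a reward 1 is observed (then stopping and taking it), and the optimal policy opens exactly the plus boxes. Say a policy h makes k mistakes if the number of plus boxes it omits plus the number of minus boxes it includes equals k. Then the expected objective of h satisfies h(D) ≤ Opt(D) − (εk/n)·(1 − (1+ε)/n)^n, and in particular h(D) ≤ Opt(D) − (εk/n)·e^{−2−2ε}. -/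
open MeasureTheory ProbabilityTheory
open scoped NNReal ENNReal

/-- The realized objective of the subsequence policy that opens the boxes in the
list `L` in order, each at cost `c`, until a reward `1` is observed (which it
then takes); if no reward `1` is found it takes `0`. -/
noncomputable def seqReward {n : ℕ} (c : ℝ) (t : Fin n → ℝ) : List (Fin n) → ℝ
  | [] => 0
  | i :: L => if t i = 1 then 1 - c else seqReward c t L - c

section Stmt18Aux

open Classical MeasureTheory Function

variable {n : ℕ}

/-- point value of a Boolean outcome -/
def ptv (b : Bool) : ℝ := if b then 1 else 0

/-- real weight of an outcome -/
noncomputable def wR (p : ℝ) (b : Bool) : ℝ := if b then p else 1 - p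

lemma wR_nonneg {p : ℝ} (h0 : 0 ≤ p) (h1 : p ≤ 1) (b : Bool) : 0 ≤ wR p b := by
  cases b <;> simp [wR] <;> linarith

instance bernR.isFiniteMeasure (p : ℝ) : IsFiniteMeasure (bernR p) := by
  unfold bernR; infer_instance

lemma bernR_apply (p : ℝ) {A : Set ℝ} (hA : MeasurableSet A) :
    bernR p A = (if (1:ℝ) ∈ A then ENNReal.ofReal p else 0)
      + (if (0:ℝ) ∈ A then ENNReal.ofReal (1 - p) else 0) := by
  rw [bernR, Measure.add_apply, Measure.smul_apply, Measure.smul_apply,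
    Measure.dirac_apply' _ hA, Measure.dirac_apply' _ hA]
  simp only [smul_eq_mul, Set.indicator_apply]
  by_cases h1 : (1:ℝ) ∈ A <;> by_cases h0 : (0:ℝ) ∈ A <;>
    simp [h1, h0, ENNReal.ofReal, ENNReal.smul_def]

lemma pi_bern_rep (p : Fin n → ℝ) (h0 : ∀ i, 0 ≤ p i) (h1 : ∀ i, p i ≤ 1) :
    Measure.pi (fun i => bernR (p i))
      = ∑ s : Fin n → Bool,
          (∏ i, ENNReal.ofReal (wR (p i) (s i))) • Measure.dirac (fun i => ptv (s i)) := by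
  refine Measure.pi_eq fun A hA => ?_
  rw [Measure.finset_sum_apply]
  have hApi : MeasurableSet (Set.pi Set.univ A) := MeasurableSet.univ_pi hA
  have hterm : ∀ s : Fin n → Bool,
      ((∏ i, ENNReal.ofReal (wR (p i) (s i))) • Measure.dirac (fun i => ptv (s i)))
          (Set.pi Set.univ A)
        = ∏ i, (ENNReal.ofReal (wR (p i) (s i)) * if ptv (s i) ∈ A i then 1 else 0) := by
    intro s
    rw [Measure.smul_apply, Measure.dirac_apply' _ hApi]
    simp only [smul_eq_mul, Set.indicator_apply, Set.mem_univ_pi]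
    by_cases h : ∀ i, ptv (s i) ∈ A i
    · rw [if_pos h, Pi.one_apply, mul_one]
      refine (Finset.prod_congr rfl fun i _ => ?_).symm
      rw [if_pos (h i), mul_one]
    · rw [if_neg h, mul_zero]
      push_neg at h
      obtain ⟨i, hi⟩ := h
      refine (Finset.prod_eq_zero (Finset.mem_univ i) ?_).symm
      rw [if_neg hi, mul_zero]
  rw [Finset.sum_congr rfl fun s _ => hterm s,
    ← Fintype.prod_sum (f := fun (i : Fin n) (b : Bool) =>
      ENNReal.ofReal (wR (p i) b) * if ptv b ∈ A i then 1 else 0)]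
  refine Finset.prod_congr rfl fun i _ => ?_
  rw [bernR_apply _ (hA i), Fintype.sum_bool]
  simp [wR, ptv]

lemma integrable_dirac' {α E : Type*} [MeasurableSpace α] [MeasurableSingletonClass α]
    [NormedAddCommGroup E] (f : α → E) (a : α) : Integrable f (Measure.dirac a) := by
  have h : f =ᵐ[Measure.dirac a] fun _ => f a := by
    rw [MeasureTheory.ae_dirac_eq]; exact Filter.eventually_pure.2 rfl
  exact (integrable_const (f a)).congr h.symm

lemma integral_rep (p : Fin n → ℝ) (h0 : ∀ i, 0 ≤ p i) (h1 : ∀ i, p i ≤ 1)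
    (f : (Fin n → ℝ) → ℝ) :
    ∫ t, f t ∂(Measure.pi fun i => bernR (p i))
      = ∑ s : Fin n → Bool, (∏ i, wR (p i) (s i)) * f (fun i => ptv (s i)) := by
  rw [pi_bern_rep p h0 h1]
  rw [integral_finset_sum_measure (by
    intro s _
    refine Integrable.smul_measure (integrable_dirac' f _) ?_
    exact (ENNReal.prod_lt_top (fun i _ => ENNReal.ofReal_lt_top)).ne)]
  refine Finset.sum_congr rfl fun s _ => ?_
  rw [integral_smul_measure, integral_dirac, ENNReal.toReal_prod, smul_eq_mul]
  congr 1
  exact Finset.prod_congr rfl fun i _ => ENNReal.toReal_ofReal (wR_nonneg (h0 i) (h1 i) (s i))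

lemma sum_wR (p : Fin n → ℝ) : ∑ s : Fin n → Bool, ∏ i, wR (p i) (s i) = 1 := by
  rw [← Fintype.prod_sum]
  rw [Finset.prod_congr rfl fun i _ => (by rw [Fintype.sum_bool]; simp [wR] :
    ∑ b : Bool, wR (p i) b = 1)]
  exact Finset.prod_const_one

@[simp] lemma ptv_true : ptv true = 1 := rfl
@[simp] lemma ptv_false : ptv false = 0 := rfl

/-- flip the `i`-th coordinate -/
def flipAt (i : Fin n) : (Fin n → Bool) ≃ (Fin n → Bool) where
  toFun s := Function.update s i (!s i)
  invFun s := Function.update s i (!s i)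
  left_inv s := by
    dsimp only
    rw [Function.update_self, Bool.not_not, Function.update_idem, Function.update_eq_self]
  right_inv s := by
    dsimp only
    rw [Function.update_self, Bool.not_not, Function.update_idem, Function.update_eq_self]

lemma sum_ite_split (F : (Fin n → Bool) → ℝ) (i : Fin n) :
    ∑ s : Fin n → Bool, F s
      = (∑ s : Fin n → Bool, if s i = true then F s else 0)
        + ∑ s : Fin n → Bool, if s i = false then F s else 0 := by
  rw [← Finset.sum_add_distrib]
  exact Finset.sum_congr rfl fun s _ => by cases h : s i <;> simp [h]

lemma sum_update_eq (F : (Fin n → Bool) → ℝ) (i : Fin n) (b : Bool) :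
    ∑ s : Fin n → Bool, F (Function.update s i b)
      = 2 * ∑ s : Fin n → Bool, if s i = b then F s else 0 := by
  have key : ∑ s : Fin n → Bool, (if s i = b then (0:ℝ) else F (Function.update s i b))
      = ∑ s : Fin n → Bool, if s i = b then F s else 0 := by
    rw [← Equiv.sum_comp (flipAt i)
      (fun s => if s i = b then (0:ℝ) else F (Function.update s i b))]
    refine Finset.sum_congr rfl fun s _ => ?_
    show (if Function.update s i (!s i) i = b then (0:ℝ)
        else F (Function.update (Function.update s i (!s i)) i b))
      = if s i = b then F s else 0
    rw [Function.update_self, Function.update_idem]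
    by_cases h : s i = b
    · rw [if_pos h, if_neg (by cases b <;> simp_all), ← h, Function.update_eq_self]
    · rw [if_neg h, if_pos (by cases b <;> cases hs : s i <;> simp_all)]
  calc ∑ s : Fin n → Bool, F (Function.update s i b)
      = ∑ s : Fin n → Bool, ((if s i = b then F s else 0)
          + (if s i = b then (0:ℝ) else F (Function.update s i b))) := by
        refine Finset.sum_congr rfl fun s _ => ?_
        by_cases h : s i = b
        · rw [if_pos h, if_pos h, add_zero, ← h, Function.update_eq_self]
        · rw [if_neg h, if_neg h, zero_add]
    _ = 2 * ∑ s : Fin n → Bool, if s i = b then F s else 0 := by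
        rw [Finset.sum_add_distrib, key]; ring

lemma two_mul_sum (F : (Fin n → Bool) → ℝ) (i : Fin n) :
    2 * ∑ s : Fin n → Bool, F s
      = (∑ s : Fin n → Bool, F (Function.update s i true))
        + ∑ s : Fin n → Bool, F (Function.update s i false) := by
  rw [sum_update_eq F i true, sum_update_eq F i false, sum_ite_split F i, mul_add]

lemma seqReward_congr (c : ℝ) : ∀ (L : List (Fin n)) (t t' : Fin n → ℝ),
    (∀ j ∈ L, t j = t' j) → seqReward c t L = seqReward c t' L
  | [], _, _, _ => rfl
  | i :: L, t, t', h => by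
    simp only [seqReward]
    rw [h i (List.mem_cons_self),
      seqReward_congr c L t t' fun j hj => h j (List.mem_cons_of_mem _ hj)]

lemma prod_wR_update (p : Fin n → ℝ) (s : Fin n → Bool) (i : Fin n) (b : Bool) :
    ∏ j, wR (p j) (Function.update s i b j)
      = wR (p i) b * ∏ j ∈ Finset.univ.erase i, wR (p j) (s j) := by
  rw [← Finset.mul_prod_erase Finset.univ _ (Finset.mem_univ i), Function.update_self]
  congr 1
  exact Finset.prod_congr rfl fun j hj => by
    rw [Function.update_of_ne (Finset.ne_of_mem_erase hj)]

/-- expected value of the subsequence policy, as a finite sum -/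
noncomputable def Gs (p : Fin n → ℝ) (c : ℝ) (L : List (Fin n)) : ℝ :=
  ∑ s : Fin n → Bool, (∏ j, wR (p j) (s j)) * seqReward c (fun j => ptv (s j)) L

lemma Gs_cons (p : Fin n → ℝ) (c : ℝ) (i : Fin n) (L : List (Fin n)) (hiL : i ∉ L) :
    Gs p c (i :: L) = (p i - c) + (1 - p i) * Gs p c L := by
  classical
  set E : (Fin n → Bool) → ℝ := fun s => ∏ j ∈ Finset.univ.erase i, wR (p j) (s j) with hE
  set S : (Fin n → Bool) → ℝ := fun s => seqReward c (fun j => ptv (s j)) L with hS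
  have hSup : ∀ (s : Fin n → Bool) (b : Bool),
      seqReward c (fun j => ptv (Function.update s i b j)) L = S s := by
    intro s b
    refine seqReward_congr c L _ _ fun j hj => ?_
    rw [Function.update_of_ne (by rintro rfl; exact hiL hj)]
  have hEup : ∀ (s : Fin n → Bool) (b : Bool), E (Function.update s i b) = E s := by
    intro s b
    exact Finset.prod_congr rfl fun j hj => by
      rw [Function.update_of_ne (Finset.ne_of_mem_erase hj)]
  have hW : ∀ (s : Fin n → Bool) (b : Bool),
      ∏ j, wR (p j) (Function.update s i b j) = wR (p i) b * E s :=
    fun s b => prod_wR_update p s i b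
  -- total mass of E
  have hmassE : ∑ s : Fin n → Bool, E s = 2 := by
    have h := two_mul_sum (fun s => ∏ j, wR (p j) (s j)) i
    rw [sum_wR] at h
    rw [Finset.sum_congr rfl fun s _ => hW s true,
      Finset.sum_congr rfl fun s _ => hW s false] at h
    rw [← Finset.sum_add_distrib] at h
    have : ∑ s : Fin n → Bool, (wR (p i) true * E s + wR (p i) false * E s)
        = ∑ s : Fin n → Bool, E s := by
      refine Finset.sum_congr rfl fun s _ => ?_
      simp only [wR, if_true, Bool.false_eq_true, if_false]
      ring
    rw [this] at h; linarith
  -- Gs L in terms of E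
  have hGL : ∑ s : Fin n → Bool, E s * S s = 2 * Gs p c L := by
    have h := two_mul_sum (fun s => (∏ j, wR (p j) (s j)) * S s) i
    have h1 : ∀ b : Bool, ∑ s : Fin n → Bool,
        (∏ j, wR (p j) (Function.update s i b j)) * S (Function.update s i b)
        = wR (p i) b * ∑ s : Fin n → Bool, E s * S s := by
      intro b
      rw [Finset.mul_sum]
      refine Finset.sum_congr rfl fun s _ => ?_
      have : S (Function.update s i b) = S s := hSup s b
      rw [hW s b, this]; ring
    rw [h1 true, h1 false] at h
    have : wR (p i) true * ∑ s : Fin n → Bool, E s * S s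
        + wR (p i) false * ∑ s : Fin n → Bool, E s * S s
        = ∑ s : Fin n → Bool, E s * S s := by
      simp only [wR, if_true, Bool.false_eq_true, if_false]
      ring
    rw [this] at h
    have hGsL : Gs p c L = ∑ s : Fin n → Bool, (∏ j, wR (p j) (s j)) * S s := rfl
    rw [hGsL]
    linarith
  -- main computation
  have hmain := two_mul_sum
    (fun s => (∏ j, wR (p j) (s j)) * seqReward c (fun j => ptv (s j)) (i :: L)) i
  have hT : ∑ s : Fin n → Bool, (∏ j, wR (p j) (Function.update s i true j)) *
      seqReward c (fun j => ptv (Function.update s i true j)) (i :: L)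
      = p i * (1 - c) * 2 := by
    have : ∀ s : Fin n → Bool, (∏ j, wR (p j) (Function.update s i true j)) *
        seqReward c (fun j => ptv (Function.update s i true j)) (i :: L)
        = p i * (1 - c) * E s := by
      intro s
      simp only [seqReward, Function.update_self, ptv_true]
      rw [if_pos trivial, hW s true]
      simp only [wR, if_true]
      ring
    rw [Finset.sum_congr rfl fun s _ => this s, ← Finset.mul_sum, hmassE]
  have hF : ∑ s : Fin n → Bool, (∏ j, wR (p j) (Function.update s i false j)) *
      seqReward c (fun j => ptv (Function.update s i false j)) (i :: L)
      = (1 - p i) * (2 * Gs p c L - c * 2) := by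
    have : ∀ s : Fin n → Bool, (∏ j, wR (p j) (Function.update s i false j)) *
        seqReward c (fun j => ptv (Function.update s i false j)) (i :: L)
        = (1 - p i) * (E s * S s - c * E s) := by
      intro s
      simp only [seqReward, Function.update_self, ptv_false]
      rw [if_neg (by norm_num), hW s false, hSup s false]
      simp only [wR, Bool.false_eq_true, if_false]
      ring
    rw [Finset.sum_congr rfl fun s _ => this s, ← Finset.mul_sum, Finset.sum_sub_distrib,
      ← Finset.mul_sum, hGL, hmassE]
  rw [hT, hF] at hmain
  have hmain' : 2 * Gs p c (i :: L)
      = p i * (1 - c) * 2 + (1 - p i) * (2 * Gs p c L - c * 2) := hmain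
  linarith


/-- value of an all-plus prefix policy -/
noncomputable def fplus (r q : ℝ) : ℕ → ℝ
  | 0 => 0
  | a + 1 => r + q * fplus r q a

lemma fplus_nonneg {r q : ℝ} (hr : 0 ≤ r) (hq : 0 ≤ q) : ∀ a, 0 ≤ fplus r q a
  | 0 => le_refl 0
  | a + 1 => by
    have := fplus_nonneg hr hq a
    simp only [fplus]
    positivity

lemma fplus_succ (r q : ℝ) : ∀ a, fplus r q (a + 1) = fplus r q a + r * q ^ a
  | 0 => by simp [fplus]
  | a + 1 => by
    show r + q * fplus r q (a + 1) = (r + q * fplus r q a) + r * q ^ (a + 1)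
    rw [fplus_succ r q a]
    ring

lemma fplus_gap {r q : ℝ} (hr : 0 ≤ r) (hq0 : 0 ≤ q) (hq1 : q ≤ 1) (N : ℕ) :
    ∀ (d a : ℕ), a + d ≤ N →
      fplus r q a + (d : ℝ) * r * q ^ N ≤ fplus r q (a + d)
  | 0, a, _ => by simp
  | d + 1, a, h => by
    have ih := fplus_gap hr hq0 hq1 N d a (by omega)
    have h1 : fplus r q (a + (d + 1)) = fplus r q (a + d) + r * q ^ (a + d) := by
      rw [show a + (d + 1) = (a + d) + 1 by ring, fplus_succ]
    have h2 : q ^ N ≤ q ^ (a + d) := pow_le_pow_of_le_one hq0 hq1 (by omega)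
    have h3 : r * q ^ N ≤ r * q ^ (a + d) := by
      exact mul_le_mul_of_nonneg_left h2 hr
    rw [h1]
    push_cast
    nlinarith

lemma Gs_le_fplus {p : Fin n → ℝ} {c r q q' : ℝ} {v : Fin n → Bool}
    (hr : 0 ≤ r) (hq0 : 0 ≤ q) (hq1 : q ≤ 1) (hq'1 : q' ≤ 1) (hqq' : q ≤ q')
    (hplus : ∀ i, v i = true → p i - c = r ∧ 1 - p i = q)
    (hminus : ∀ i, v i = false → p i - c = -r ∧ 1 - p i = q') :
    ∀ L : List (Fin n), L.Nodup →
      Gs p c L ≤ fplus r q (L.countP v)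
        - (L.countP (fun i => !v i) : ℝ) * r * q ^ L.length
  | [], _ => by simp [Gs, seqReward, fplus]
  | i :: L, hnd => by
    rw [List.nodup_cons] at hnd
    obtain ⟨hiL, hnd⟩ := hnd
    have ih := Gs_le_fplus hr hq0 hq1 hq'1 hqq' hplus hminus L hnd
    rw [Gs_cons p c i L hiL]
    have hql : (0:ℝ) ≤ q ^ L.length := pow_nonneg hq0 _
    have hql1 : q ^ (L.length + 1) ≤ 1 := pow_le_one₀ hq0 hq1
    have hfnn : 0 ≤ fplus r q (L.countP v) := fplus_nonneg hr hq0 _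
    have hm : (0:ℝ) ≤ (L.countP (fun i => !v i) : ℝ) := Nat.cast_nonneg _
    cases hv : v i with
    | true =>
      obtain ⟨h1, h2⟩ := hplus i hv
      rw [List.countP_cons_of_pos (by simp [hv]),
        List.countP_cons_of_neg (by simp [hv])]
      have hfs : fplus r q (L.countP v + 1) = r + q * fplus r q (L.countP v) := rfl
      rw [hfs]
      have hmul : (1 - p i) * Gs p c L ≤ q * (fplus r q (L.countP v)
          - (L.countP (fun i => !v i) : ℝ) * r * q ^ L.length) := by
        rw [h2]
        exact mul_le_mul_of_nonneg_left ih hq0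
      simp only [List.length_cons]
      have hmul2 : q * (fplus r q (L.countP v)
          - (L.countP (fun i => !v i) : ℝ) * r * q ^ L.length)
          = q * fplus r q (L.countP v)
            - (L.countP (fun i => !v i) : ℝ) * r * q ^ (L.length + 1) := by
        rw [pow_succ]; ring
      linarith
    | false =>
      obtain ⟨h1, h2⟩ := hminus i hv
      rw [List.countP_cons_of_neg (by simp [hv]),
        List.countP_cons_of_pos (by simp [hv])]
      have hq'0 : 0 ≤ q' := le_trans hq0 hqq'
      have hmul : (1 - p i) * Gs p c L ≤ q' * (fplus r q (L.countP v)
          - (L.countP (fun i => !v i) : ℝ) * r * q ^ L.length) := by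
        rw [h2]
        exact mul_le_mul_of_nonneg_left ih hq'0
      simp only [List.length_cons]
      have e1 : q' * fplus r q (L.countP v) ≤ fplus r q (L.countP v) := by
        nlinarith
      have e2 : q * ((L.countP (fun i => !v i) : ℝ) * r * q ^ L.length)
          ≤ q' * ((L.countP (fun i => !v i) : ℝ) * r * q ^ L.length) := by
        apply mul_le_mul_of_nonneg_right hqq'
        positivity
      have e3 : r * q ^ (L.length + 1) ≤ r := by
        nlinarith
      have hexp : q' * (fplus r q (L.countP v)
          - (L.countP (fun i => !v i) : ℝ) * r * q ^ L.length)
          = q' * fplus r q (L.countP v)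
            - q' * ((L.countP (fun i => !v i) : ℝ) * r * q ^ L.length) := by ring
      have eq2 : q * ((L.countP (fun i => !v i) : ℝ) * r * q ^ L.length)
          = (L.countP (fun i => !v i) : ℝ) * r * q ^ (L.length + 1) := by
        rw [pow_succ]; ring
      push_cast
      linarith

lemma Gs_plus {p : Fin n → ℝ} {c r q : ℝ} {v : Fin n → Bool}
    (hplus : ∀ i, v i = true → p i - c = r ∧ 1 - p i = q) :
    ∀ L : List (Fin n), L.Nodup → (∀ i ∈ L, v i = true) →
      Gs p c L = fplus r q L.length
  | [], _, _ => by simp [Gs, seqReward, fplus]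
  | i :: L, hnd, hall => by
    rw [List.nodup_cons] at hnd
    obtain ⟨hiL, hnd⟩ := hnd
    obtain ⟨h1, h2⟩ := hplus i (hall i (List.mem_cons_self))
    rw [Gs_cons p c i L hiL,
      Gs_plus hplus L hnd fun j hj => hall j (List.mem_cons_of_mem _ hj)]
    show _ = r + q * fplus r q L.length
    rw [← h1, ← h2]

lemma countP_eq_card (L : List (Fin n)) (hL : L.Nodup) (f : Fin n → Bool) :
    L.countP f = (Finset.univ.filter fun i => f i = true ∧ i ∈ L).card := by
  classical
  have h1 : (Finset.univ.filter fun i => f i = true ∧ i ∈ L)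
      = L.toFinset.filter (fun i => f i) := by
    ext j
    simp [List.mem_toFinset, and_comm]
  rw [h1, ← List.toFinset_filter, List.toFinset_card_of_nodup (hL.filter _),
    List.countP_eq_length_filter]

open Classical in
/-- the policy that opens boxes in the order of `L` until a reward `1` is seen -/
noncomputable def polFor (L : List (Fin n)) : (Fin n → Option ℝ) → Option (Fin n) :=
  fun hist => if ∃ j, hist j = some 1 then none
    else L.find? fun j => (hist j).isNone

/-- history after opening exactly the boxes of `Pre`, all revealing reward `0` -/
def histOf (Pre : List (Fin n)) : Fin n → Option ℝ :=
  fun j => if j ∈ Pre then some 0 else none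

lemma histBest_histOf (Pre : List (Fin n)) : histBest (histOf Pre) = 0 := by
  have h : ∀ j, ((histOf Pre j).getD 0) = 0 := by
    intro j; unfold histOf; by_cases h : j ∈ Pre <;> simp [h]
  rw [histBest]
  rcases isEmpty_or_nonempty (Fin n) with he | hne
  · exact Real.iSup_of_isEmpty _
  · simp only [h]; exact ciSup_const

lemma histPaid_histOf (c : ℝ) (Pre : List (Fin n)) (hPre : Pre.Nodup) :
    histPaid (fun _ => c) (histOf Pre) = Pre.length * c := by
  rw [histPaid]
  have h : ∀ j : Fin n, (if (histOf Pre j).isSome then c else 0)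
      = if j ∈ Pre.toFinset then c else 0 := by
    intro j; unfold histOf; by_cases h : j ∈ Pre <;> simp [h]
  rw [Finset.sum_congr rfl fun j _ => h j, Finset.sum_ite_mem, Finset.univ_inter,
    Finset.sum_const, List.toFinset_card_of_nodup hPre, nsmul_eq_mul]

lemma histOf_no_one (Pre : List (Fin n)) : ¬ ∃ j, histOf Pre j = some 1 := by
  rintro ⟨j, hj⟩
  unfold histOf at hj
  by_cases h : j ∈ Pre <;> simp [h] at hj

lemma find?_append_of_neg {α} (l1 l2 : List α) (p : α → Bool)
    (h : ∀ x ∈ l1, p x = false) : (l1 ++ l2).find? p = l2.find? p := by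
  induction l1 with
  | nil => rfl
  | cons a l ih =>
    rw [List.cons_append, List.find?_cons_of_neg (by simp [h a (List.mem_cons_self)])]
    exact ih fun x hx => h x (List.mem_cons_of_mem _ hx)

lemma runPolicyAux_polFor (L : List (Fin n)) (hL : L.Nodup) (c : ℝ) (t : Fin n → ℝ)
    (ht : ∀ j, t j = 0 ∨ t j = 1) :
    ∀ (M Pre : List (Fin n)) (fuel : ℕ), L = Pre ++ M → M.length ≤ fuel →
      runPolicyAux (polFor L) (fun _ => c) t fuel (histOf Pre)
        = seqReward c t M - Pre.length * c
  | [], Pre, fuel, hLP, _ => by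
    have hPre : Pre.Nodup := by rwa [hLP, List.append_nil] at hL
    have hfind : polFor L (histOf Pre) = none := by
      rw [polFor, if_neg (histOf_no_one Pre)]
      refine List.find?_eq_none.2 fun j hj => ?_
      have hjP : j ∈ Pre := by rwa [hLP, List.append_nil] at hj
      simp [histOf, hjP]
    have hstop : runPolicyAux (polFor L) (fun _ => c) t fuel (histOf Pre)
        = histBest (histOf Pre) - histPaid (fun _ => c) (histOf Pre) := by
      cases fuel with
      | zero => simp only [runPolicyAux]
      | succ f => simp only [runPolicyAux, hfind]
    rw [hstop, histBest_histOf, histPaid_histOf c Pre hPre]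
    simp [seqReward]
  | i :: M, Pre, fuel, hLP, hlen => by
    have hnd : (Pre ++ i :: M).Nodup := hLP ▸ hL
    rw [List.nodup_append] at hnd
    obtain ⟨hndP, hndM, hdisj⟩ := hnd
    have hiPre : i ∉ Pre := fun h => hdisj i h i (List.mem_cons_self) rfl
    cases fuel with
    | zero => simp at hlen
    | succ f =>
      have hfind : polFor L (histOf Pre) = some i := by
        rw [polFor, if_neg (histOf_no_one Pre), hLP,
          find?_append_of_neg _ _ _ (fun x hx => by simp [histOf, hx]),
          List.find?_cons_of_pos (by simp [histOf, hiPre])]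
      simp only [runPolicyAux, hfind]
      rw [if_neg (by simp [histOf, hiPre])]
      rcases ht i with h0 | h1
      · have hupd : Function.update (histOf Pre) i (some (t i)) = histOf (Pre ++ [i]) := by
          funext j
          by_cases hji : j = i
          · subst hji
            rw [Function.update_self, h0]
            simp [histOf]
          · rw [Function.update_of_ne hji]
            simp [histOf, List.mem_append, hji]
        rw [hupd, runPolicyAux_polFor L hL c t ht M (Pre ++ [i]) f
          (by rw [hLP, List.append_assoc]; rfl)
          (by simp only [List.length_cons] at hlen; omega)]
        simp only [seqReward, List.length_append, List.length_singleton]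
        rw [if_neg (by rw [h0]; norm_num)]
        push_cast; ring
      · have hstop : runPolicyAux (polFor L) (fun _ => c) t f
            (Function.update (histOf Pre) i (some (t i)))
            = histBest (Function.update (histOf Pre) i (some (t i)))
              - histPaid (fun _ => c) (Function.update (histOf Pre) i (some (t i))) := by
          have hpol : polFor L (Function.update (histOf Pre) i (some (t i))) = none := by
            rw [polFor, if_pos ⟨i, by rw [Function.update_self, h1]⟩]
          cases f with
          | zero => simp only [runPolicyAux]
          | succ f' => simp only [runPolicyAux, hpol]
        have hbest : histBest (Function.update (histOf Pre) i (some (t i))) = 1 := by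
          have hne : Nonempty (Fin n) := ⟨i⟩
          rw [histBest]
          apply le_antisymm
          · apply ciSup_le
            intro j
            by_cases hji : j = i
            · subst hji; rw [Function.update_self, h1]; norm_num
            · rw [Function.update_of_ne hji]
              have hz : ((histOf Pre j).getD 0) = 0 := by
                unfold histOf; by_cases h : j ∈ Pre <;> simp [h]
              rw [hz]; norm_num
          · have hb : BddAbove (Set.range fun j =>
                ((Function.update (histOf Pre) i (some (t i)) j).getD 0)) :=
              Set.Finite.bddAbove (Set.finite_range _)
            have hle := le_ciSup hb i
            rw [Function.update_self] at hle
            rw [← h1]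
            simpa using hle
        have hpaid : histPaid (fun _ => c) (Function.update (histOf Pre) i (some (t i)))
            = (Pre.length + 1) * c := by
          rw [histPaid]
          have h : ∀ j : Fin n, (if (Function.update (histOf Pre) i (some (t i)) j).isSome
              then c else 0) = if j ∈ insert i Pre.toFinset then c else 0 := by
            intro j
            by_cases hji : j = i
            · subst hji; rw [Function.update_self]; simp
            · rw [Function.update_of_ne hji]
              unfold histOf
              by_cases h : j ∈ Pre <;> simp [h, hji]
          rw [Finset.sum_congr rfl fun j _ => h j, Finset.sum_ite_mem, Finset.univ_inter,
            Finset.sum_const, Finset.card_insert_of_notMem (by simpa using hiPre),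
            List.toFinset_card_of_nodup hndP, nsmul_eq_mul]
          push_cast; ring
        rw [hstop, hbest, hpaid]
        simp only [seqReward]
        rw [if_pos h1]
        push_cast; ring

lemma runPolicy_polFor (L : List (Fin n)) (hL : L.Nodup) (c : ℝ) (t : Fin n → ℝ)
    (ht : ∀ j, t j = 0 ∨ t j = 1) :
    runPolicy (polFor L) (fun _ => c) t = seqReward c t L := by
  have h := runPolicyAux_polFor L hL c t ht L List.nil n rfl
    (by simpa using hL.length_le_card)
  have hh : (fun _ : Fin n => (none : Option ℝ)) = histOf ([] : List (Fin n)) := by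
    funext j; simp [histOf]
  rw [runPolicy, hh, h]
  simp

lemma histPaid_nonneg (c : Fin n → ℝ) (hc : ∀ j, 0 ≤ c j) (hist : Fin n → Option ℝ) :
    0 ≤ histPaid c hist := by
  rw [histPaid]
  exact Finset.sum_nonneg fun j _ => by by_cases h : (hist j).isSome <;> simp [h, hc j]

lemma histBest_le_one (hist : Fin n → Option ℝ) (h : ∀ j, (hist j).getD 0 ≤ 1) :
    histBest hist ≤ 1 := by
  rw [histBest]
  rcases isEmpty_or_nonempty (Fin n) with he | hne
  · rw [Real.iSup_of_isEmpty]; norm_num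
  · exact ciSup_le h

lemma runPolicyAux_le_one (π : (Fin n → Option ℝ) → Option (Fin n)) (c : Fin n → ℝ)
    (hc : ∀ j, 0 ≤ c j) (t : Fin n → ℝ) (ht : ∀ j, t j ≤ 1) :
    ∀ (fuel : ℕ) (hist : Fin n → Option ℝ), (∀ j, (hist j).getD 0 ≤ 1) →
      runPolicyAux π c t fuel hist ≤ 1
  | 0, hist, h => by
    simp only [runPolicyAux]
    have h1 := histPaid_nonneg c hc hist
    have h2 := histBest_le_one hist h
    linarith
  | fuel + 1, hist, h => by
    simp only [runPolicyAux]
    have h1 := histPaid_nonneg c hc hist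
    have h2 := histBest_le_one hist h
    cases hπ : π hist with
    | none =>
      show histBest hist - histPaid c hist ≤ 1
      linarith
    | some i =>
      show (if (hist i).isSome then histBest hist - histPaid c hist
        else runPolicyAux π c t fuel (Function.update hist i (some (t i)))) ≤ 1
      by_cases hs : (hist i).isSome
      · rw [if_pos hs]; linarith
      · rw [if_neg hs]
        refine runPolicyAux_le_one π c hc t ht fuel _ fun j => ?_
        by_cases hji : j = i
        · subst hji; rw [Function.update_self]; simpa using ht j
        · rw [Function.update_of_ne hji]; exact h j

end Stmt18Aux

/-!
STATEMENT 18: mistakes cost revenue: on the hard Pandora instance (costs `1/n`,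
Bernoulli boxes), a subsequence policy `L` making `k` mistakes (plus boxes
omitted plus minus boxes included) satisfies
`h(D) ≤ Opt(D) − (εk/n)·(1−(1+ε)/n)ⁿ ≤ Opt(D) − (εk/n)·e^{−2−2ε}`. -/
set_option maxHeartbeats 2000000 in
theorem stmt18 (n : ℕ) (hn : 1 ≤ n) (ε : ℝ) (hε : ε ∈ Set.Ioo (0 : ℝ) 1)
    (hsmall : (1 + ε) / (n : ℝ) < 1 / 2)
    (v : Fin n → Bool) (L : List (Fin n)) (hL : L.Nodup)
    (k : ℕ)
    (hk : k = (Finset.univ.filter fun i : Fin n => v i = true ∧ i ∉ L).card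
            + (Finset.univ.filter fun i : Fin n => v i = false ∧ i ∈ L).card) :
    (∫ t, seqReward (1 / (n : ℝ)) t L ∂(Measure.pi (hardBox n ε v)))
        ≤ pandoraOpt (hardBox n ε v) (fun _ => 1 / (n : ℝ))
          - ε * k / n * (1 - (1 + ε) / n) ^ n
    ∧ (∫ t, seqReward (1 / (n : ℝ)) t L ∂(Measure.pi (hardBox n ε v)))
        ≤ pandoraOpt (hardBox n ε v) (fun _ => 1 / (n : ℝ))
          - ε * k / n * Real.exp (-2 - 2 * ε) := by
  
  classical
  obtain ⟨hε0, hε1⟩ := hε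
  have hn0 : (0:ℝ) < n := by exact_mod_cast hn
  have hnne : (n:ℝ) ≠ 0 := ne_of_gt hn0
  set p : Fin n → ℝ := fun i => (1 + if v i then ε else -ε) / n with hpdef
  have hhb : hardBox n ε v = fun i => bernR (p i) := rfl
  have h0 : ∀ i, 0 ≤ p i := by
    intro i
    rw [hpdef]
    dsimp only
    apply div_nonneg _ hn0.le
    split <;> linarith
  have hple : ∀ i, p i ≤ (1 + ε) / n := by
    intro i
    rw [hpdef]
    dsimp only
    apply (div_le_div_iff_of_pos_right hn0).2
    split <;> linarith
  have h1 : ∀ i, p i ≤ 1 := fun i => le_trans (hple i) (by linarith)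
  set c : ℝ := 1 / n with hcdef
  set q : ℝ := 1 - (1 + ε) / n with hqdef
  set q' : ℝ := 1 - (1 - ε) / n with hq'def
  set r : ℝ := ε / n with hrdef
  have hr0 : 0 ≤ r := by rw [hrdef]; positivity
  have hq0 : 0 ≤ q := by rw [hqdef]; linarith
  have hq1 : q ≤ 1 := by
    rw [hqdef]
    have : 0 ≤ (1 + ε) / n := by positivity
    linarith
  have hq'1 : q' ≤ 1 := by
    rw [hq'def]
    have : 0 ≤ (1 - ε) / n := by apply div_nonneg _ hn0.le; linarith
    linarith
  have hqq' : q ≤ q' := by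
    rw [hqdef, hq'def]
    have : (1 - ε) / n ≤ (1 + ε) / n := by
      apply (div_le_div_iff_of_pos_right hn0).2; linarith
    linarith
  have hplus : ∀ i, v i = true → p i - c = r ∧ 1 - p i = q := by
    intro i hv
    have hpi : p i = (1 + ε) / n := by
      rw [hpdef]; dsimp only; rw [hv]; norm_num
    constructor
    · rw [hpi, hcdef, hrdef, div_sub_div_same]
      congr 1
      ring
    · rw [hpi, hqdef]
  have hminus : ∀ i, v i = false → p i - c = -r ∧ 1 - p i = q' := by
    intro i hv
    have hpi : p i = (1 - ε) / n := by
      rw [hpdef]; dsimp only; rw [hv]; norm_num [sub_eq_add_neg]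
    constructor
    · rw [hpi, hcdef, hrdef, div_sub_div_same, ← neg_div]
      congr 1
      ring
    · rw [hpi, hq'def]
  have hint : (∫ t, seqReward c t L ∂(Measure.pi (hardBox n ε v))) = Gs p c L := by
    rw [hhb, integral_rep p h0 h1]
    rfl
  -- counting
  set a := L.countP v with hadef
  set m := L.countP (fun i => !v i) with hmdef
  set P := (Finset.univ.filter fun i : Fin n => v i = true).card with hPdef
  have ha : a = (Finset.univ.filter fun i : Fin n => v i = true ∧ i ∈ L).card := by
    rw [hadef]; exact countP_eq_card L hL v
  have hm : m = (Finset.univ.filter fun i : Fin n => v i = false ∧ i ∈ L).card := by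
    rw [hmdef, countP_eq_card L hL]
    congr 1
    apply Finset.filter_congr
    intro x _
    simp [Bool.not_eq_true']
  have hsplitP : (Finset.univ.filter fun i : Fin n => v i = true ∧ i ∈ L).card
      + (Finset.univ.filter fun i : Fin n => v i = true ∧ i ∉ L).card = P := by
    have e1 : (Finset.univ.filter fun i : Fin n => v i = true ∧ i ∈ L)
        = ((Finset.univ.filter fun i : Fin n => v i = true).filter fun i => i ∈ L) := by
      ext x; simp [and_assoc]
    have e2 : (Finset.univ.filter fun i : Fin n => v i = true ∧ i ∉ L)
        = ((Finset.univ.filter fun i : Fin n => v i = true).filter fun i => ¬ (i ∈ L)) := by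
      ext x; simp [and_assoc]
    rw [hPdef, e1, e2, Finset.card_filter_add_card_filter_not]
  have haP : a ≤ P := by omega
  have hkPam : k = (P - a) + m := by omega
  have hPn : P ≤ n := by
    rw [hPdef]
    have := Finset.card_filter_le (Finset.univ : Finset (Fin n)) (fun i => v i = true)
    simpa using this
  have hlenL : L.length ≤ n := by simpa using hL.length_le_card
  -- value chain
  have hGsle := Gs_le_fplus hr0 hq0 hq1 hq'1 hqq' hplus hminus L hL
  have hqpow : q ^ n ≤ q ^ L.length := pow_le_pow_of_le_one hq0 hq1 hlenL
  have hgap := fplus_gap hr0 hq0 hq1 n (P - a) a (by omega)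
  have haPa : a + (P - a) = P := by omega
  rw [haPa] at hgap
  -- optimal value
  set Lp := (Finset.univ.filter fun i : Fin n => v i = true).toList with hLpdef
  have hLpnd : Lp.Nodup := Finset.nodup_toList _
  have hLpmem : ∀ i ∈ Lp, v i = true := by
    intro i hi
    rw [hLpdef, Finset.mem_toList, Finset.mem_filter] at hi
    exact hi.2
  have hLplen : Lp.length = P := by rw [hLpdef, Finset.length_toList]
  have hGsLp : Gs p c Lp = fplus r q P := by
    rw [Gs_plus hplus Lp hLpnd hLpmem, hLplen]
  have hub : ∀ π : (Fin n → Option ℝ) → Option (Fin n),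
      (∫ t, runPolicy π (fun _ => c) t ∂(Measure.pi (hardBox n ε v))) ≤ 1 := by
    intro π
    rw [hhb, integral_rep p h0 h1]
    have hrun : ∀ s : Fin n → Bool, runPolicy π (fun _ => c) (fun i => ptv (s i)) ≤ 1 := by
      intro s
      rw [runPolicy]
      exact runPolicyAux_le_one π _ (fun j => by rw [hcdef]; positivity) _
        (fun j => by cases hs : s j <;> simp [hs]) n _ (fun j => by simp)
    calc ∑ s : Fin n → Bool,
          (∏ j, wR (p j) (s j)) * runPolicy π (fun _ => c) (fun i => ptv (s i))
        ≤ ∑ s : Fin n → Bool, (∏ j, wR (p j) (s j)) * 1 :=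
          Finset.sum_le_sum fun s _ => mul_le_mul_of_nonneg_left (hrun s)
            (Finset.prod_nonneg fun j _ => wR_nonneg (h0 j) (h1 j) _)
      _ = 1 := by simp only [mul_one]; exact sum_wR p
  have hbdd : BddAbove (Set.range fun π : (Fin n → Option ℝ) → Option (Fin n) =>
      ∫ t, runPolicy π (fun _ => c) t ∂(Measure.pi (hardBox n ε v))) := by
    refine ⟨1, ?_⟩
    rintro x ⟨π, rfl⟩
    exact hub π
  have hGseq : Gs p c Lp = ∑ s : Fin n → Bool,
      (∏ j, wR (p j) (s j)) * runPolicy (polFor Lp) (fun _ => c) (fun i => ptv (s i)) := by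
    show (∑ s : Fin n → Bool,
      (∏ j, wR (p j) (s j)) * seqReward c (fun j => ptv (s j)) Lp) = _
    exact Finset.sum_congr rfl fun s _ => by
      rw [runPolicy_polFor Lp hLpnd c _ (fun j => by cases hs : s j <;> simp [hs])]
  have hopt : fplus r q P ≤ pandoraOpt (hardBox n ε v) (fun _ => c) := by
    unfold pandoraOpt
    refine le_trans (le_of_eq ?_) (le_ciSup hbdd (polFor Lp))
    rw [← hGsLp, hGseq, hhb, integral_rep p h0 h1]
  -- main bound chain
  have hmain : Gs p c L ≤ pandoraOpt (hardBox n ε v) (fun _ => c)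
      - (k : ℝ) * r * q ^ n := by
    have h2 : ((m : ℝ)) * r * q ^ n ≤ (m : ℝ) * r * q ^ L.length := by
      apply mul_le_mul_of_nonneg_left hqpow
      positivity
    have hkcast : (k : ℝ) = ((P - a : ℕ) : ℝ) + (m : ℝ) := by
      rw [hkPam]; push_cast; ring
    rw [hkcast]
    linarith [hGsle, h2, hgap, hopt]
  -- exp bound
  have hx0 : (0:ℝ) < (1 + ε) / n := by positivity
  have hexpq : Real.exp (-2 - 2 * ε) ≤ q ^ n := by
    have hEe := Real.add_one_le_exp (2 * ((1 + ε) / n))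
    have key : 1 ≤ (1 - (1 + ε) / n) * Real.exp (2 * ((1 + ε) / n)) := by
      nlinarith [hEe, hx0, hsmall,
        mul_pos hx0 (by linarith : (0:ℝ) < 1 - 2 * ((1 + ε) / n)),
        mul_nonneg (by linarith : (0:ℝ) ≤ 1 - (1 + ε) / n)
          (by linarith : (0:ℝ) ≤ Real.exp (2 * ((1 + ε) / n)) - (2 * ((1 + ε) / n) + 1))]
    have h2 : Real.exp (-(2 * ((1 + ε) / n))) * Real.exp (2 * ((1 + ε) / n)) = 1 := by
      rw [← Real.exp_add]; simp
    have hE := Real.exp_pos (2 * ((1 + ε) / n))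
    have hqe : Real.exp (-(2 * ((1 + ε) / n))) ≤ q := by
      rw [hqdef]
      nlinarith [h2, key, hE]
    have hpow := pow_le_pow_left₀ (Real.exp_pos _).le hqe n
    rw [← Real.exp_nat_mul] at hpow
    have harg : (n:ℝ) * -(2 * ((1 + ε) / n)) = -2 - 2 * ε := by
      field_simp
      ring
    rwa [harg] at hpow
  have hknn : (0:ℝ) ≤ ε * (k:ℝ) / (n:ℝ) := by
    apply div_nonneg _ hn0.le
    exact mul_nonneg hε0.le (Nat.cast_nonneg k)
  have heq : ε * (k:ℝ) / (n:ℝ) * q ^ n = (k:ℝ) * r * q ^ n := by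
    rw [hrdef]; ring
  have hfin1 : (∫ t, seqReward c t L ∂(Measure.pi (hardBox n ε v)))
      ≤ pandoraOpt (hardBox n ε v) (fun _ => c) - ε * (k:ℝ) / (n:ℝ) * q ^ n := by
    rw [hint, heq]
    exact hmain
  constructor
  · exact hfin1
  · have h3 : ε * (k:ℝ) / (n:ℝ) * Real.exp (-2 - 2 * ε) ≤ ε * (k:ℝ) / (n:ℝ) * q ^ n :=
      mul_le_mul_of_nonneg_left hexpq hknn
    linarith [hfin1, h3]
end
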